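/- arXiv:1004.2133 — 4 statements merged into one kernel-verified Lean document; each statement's English description precedes it below -/
import Mathlib

section
/- Let α ∈ (1,2), p ∈ (1,α), c > 0, b > 0 and a₀ ∈ ℝ. If F and G both belong to the class S_b, both satisfy the fractional integro-differential equation z F'(z) + (c/(α−1)) ∫₀^z F''(x) (z−x)^{1−α} dx − p F(z) = 0 for all z ∈ (0,b], and F(0) = G(0) = a₀, then F(z) = G(z) for all z ∈ [0,b]. -/
open Set Filter MeasureTheory Asymptotics Topology

noncomputable section

/-- The class `S_b`: `F` is continuously differentiable on `[0,b]`, twice continuously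
differentiable on `(0,b]`, `|F''(z)| = O(z^(α-2))` as `z ↓ 0`, and `F'(0) = 0`. -/
def MemS (α b : ℝ) (F : ℝ → ℝ) : Prop :=
  (∀ z ∈ Set.Icc (0:ℝ) b, DifferentiableAt ℝ F z) ∧
  ContinuousOn (deriv F) (Set.Icc 0 b) ∧
  (∀ z ∈ Set.Ioc (0:ℝ) b, DifferentiableAt ℝ (deriv F) z) ∧
  ContinuousOn (deriv (deriv F)) (Set.Ioc 0 b) ∧
  (deriv (deriv F)) =O[𝓝[>] (0:ℝ)] (fun z => z ^ (α - 2)) ∧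
  deriv F 0 = 0

/-- The fractional integro-differential equation
`z F'(z) + (c/(α−1)) ∫₀^z F''(x) (z−x)^{1−α} dx − p F(z) = 0`. -/
def FracDE (α p c : ℝ) (F : ℝ → ℝ) (z : ℝ) : Prop :=
  z * deriv F z
      + (c / (α - 1)) * (∫ x in (0:ℝ)..z, deriv (deriv F) x * (z - x) ^ (1 - α))
      - p * F z = 0


lemma rpow_shift_intervalIntegrable {s u : ℝ} (hs : -1 < s) (a b : ℝ) :
    IntervalIntegrable (fun x => (x - u) ^ s) volume a b := by
  have h := (intervalIntegral.intervalIntegrable_rpow' (a := a - u) (b := b - u) hs).comp_sub_right u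
  simpa using h

lemma rpow_sub_intervalIntegrable {r z : ℝ} (hr : -1 < r) (a b : ℝ) :
    IntervalIntegrable (fun x => (z - x) ^ r) volume a b := by
  have h := (intervalIntegral.intervalIntegrable_rpow' (a := z - a) (b := z - b) hr).comp_sub_left z
  simpa using h

lemma kernel_intervalIntegrable {r s u z : ℝ} (hr : -1 < r) (hr0 : r < 0)
    (hs : -1 < s) (hs0 : s < 0) (huz : u < z) :
    IntervalIntegrable (fun x => (z - x) ^ r * (x - u) ^ s) volume u z := by
  set m := (u + z) / 2 with hm
  have hum : u < m := by simp [hm]; linarith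
  have hmz : m < z := by simp [hm]; linarith
  have hmeas : ∀ a b : ℝ, AEStronglyMeasurable (fun x => (z - x) ^ r * (x - u) ^ s)
      (volume.restrict (Set.uIoc a b)) := by
    intro a b
    exact (((measurable_const.sub measurable_id).pow_const r).mul
      ((measurable_id.sub measurable_const).pow_const s)).aestronglyMeasurable
  have h1 : IntervalIntegrable (fun x => (z - x) ^ r * (x - u) ^ s) volume u m := by
    apply IntervalIntegrable.mono_fun' (g := fun x => (z - m) ^ r * (x - u) ^ s)
    · exact (rpow_shift_intervalIntegrable hs u m).const_mul _
    · exact hmeas u m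
    · rw [Set.uIoc_of_le hum.le]
      filter_upwards [ae_restrict_mem measurableSet_Ioc] with x hx
      have hx1 : u < x := hx.1
      have hx2 : x ≤ m := hx.2
      have hzx : (0:ℝ) < z - x := by linarith
      have hxu : (0:ℝ) < x - u := by linarith
      rw [Real.norm_eq_abs, abs_mul, abs_of_pos (Real.rpow_pos_of_pos hzx r),
        abs_of_pos (Real.rpow_pos_of_pos hxu s)]
      have : (z - x) ^ r ≤ (z - m) ^ r :=
        Real.rpow_le_rpow_of_nonpos (by linarith) (by linarith) hr0.le
      exact mul_le_mul_of_nonneg_right this (Real.rpow_pos_of_pos hxu s).le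
  have h2 : IntervalIntegrable (fun x => (z - x) ^ r * (x - u) ^ s) volume m z := by
    apply IntervalIntegrable.mono_fun' (g := fun x => (z - x) ^ r * (m - u) ^ s)
    · exact (rpow_sub_intervalIntegrable hr m z).mul_const _
    · exact hmeas m z
    · rw [Set.uIoc_of_le hmz.le]
      filter_upwards [ae_restrict_mem measurableSet_Ioc] with x hx
      have hx1 : m < x := hx.1
      have hx2 : x ≤ z := hx.2
      have hxu : (0:ℝ) < x - u := by linarith
      rw [Real.norm_eq_abs, abs_mul, abs_of_pos (Real.rpow_pos_of_pos hxu s)]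
      rcases eq_or_lt_of_le hx2 with h | h
      · rw [h, sub_self, Real.zero_rpow (show r ≠ 0 by linarith)]
        simp
      · have hzx : (0:ℝ) < z - x := by linarith
        rw [abs_of_pos (Real.rpow_pos_of_pos hzx r)]
        have : (x - u) ^ s ≤ (m - u) ^ s :=
          Real.rpow_le_rpow_of_nonpos (by linarith) (by linarith) hs0.le
        exact mul_le_mul_of_nonneg_left this (Real.rpow_pos_of_pos hzx r).le
  exact h1.trans h2

lemma kernel_integral_eq {r s u z : ℝ} (hr0 : r < 0) (hs0 : s < 0) (huz : u < z) :
    ∫ x in u..z, (z - x) ^ r * (x - u) ^ s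
      = (z - u) ^ (r + s + 1) * ∫ t in (0:ℝ)..1, (1 - t) ^ r * t ^ s := by
  set c := z - u with hcdef
  have hc : (0:ℝ) < c := by simp [hcdef]; linarith
  have h := intervalIntegral.integral_comp_mul_add
    (f := fun x => (z - x) ^ r * (x - u) ^ s) (a := 0) (b := 1) (ne_of_gt hc) u
  rw [mul_zero, zero_add, mul_one] at h
  have hcu : c + u = z := by simp [hcdef]
  rw [hcu] at h
  have h2 : ∀ t ∈ Set.uIcc (0:ℝ) 1,
      (z - (c * t + u)) ^ r * (c * t + u - u) ^ s = c ^ (r + s) * ((1 - t) ^ r * t ^ s) := by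
    intro t ht
    rw [Set.uIcc_of_le (by norm_num : (0:ℝ) ≤ 1)] at ht
    have h0t : 0 ≤ t := ht.1
    have ht1 : t ≤ 1 := ht.2
    have e1 : z - (c * t + u) = c * (1 - t) := by simp [hcdef]; ring
    have e2 : c * t + u - u = c * t := by ring
    rw [e1, e2, Real.mul_rpow hc.le (by linarith), Real.mul_rpow hc.le h0t,
      Real.rpow_add hc]
    ring
  rw [intervalIntegral.integral_congr h2] at h
  rw [intervalIntegral.integral_const_mul] at h
  have hthis := congrArg (fun y => c * y) h
  simp only [smul_eq_mul, ← mul_assoc, mul_inv_cancel₀ (ne_of_gt hc), one_mul] at hthis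
  rw [← hthis]
  rw [show r + s + 1 = 1 + (r + s) by ring, Real.rpow_add hc 1 (r+s), Real.rpow_one, mul_assoc]

lemma beta_pos {r s : ℝ} (hr : -1 < r) (hr0 : r < 0) (hs : -1 < s) (hs0 : s < 0) :
    0 < ∫ t in (0:ℝ)..1, (1 - t) ^ r * t ^ s := by
  have hint : IntervalIntegrable (fun t => (1 - t) ^ r * t ^ s) volume 0 1 := by
    have := kernel_intervalIntegrable hr hr0 hs hs0 (show (0:ℝ) < 1 by norm_num)
    simpa using this
  refine intervalIntegral.intervalIntegral_pos_of_pos_on hint ?_ (by norm_num)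
  intro t ht
  exact mul_pos (Real.rpow_pos_of_pos (by linarith [ht.2]) r)
    (Real.rpow_pos_of_pos ht.1 s)

lemma memS_dd_bound {α b : ℝ} (hα2 : α < 2) (hb : 0 < b) {W : ℝ → ℝ} (hW : MemS α b W) :
    ∃ K : ℝ, 0 ≤ K ∧ ∀ u ∈ Set.Ioc (0:ℝ) b, |deriv (deriv W) u| ≤ K * u ^ (α - 2) := by
  obtain ⟨C, hC⟩ := hW.2.2.2.2.1.bound
  rw [Filter.eventually_iff, mem_nhdsGT_iff_exists_Ioo_subset] at hC
  obtain ⟨ε, hε, hsub⟩ := hC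
  have hε0 : (0:ℝ) < ε := hε
  set e := min (ε / 2) b with he
  have he0 : 0 < e := lt_min (by linarith) hb
  have heb : e ≤ b := min_le_right _ _
  -- bound on [e, b]
  have hcont : ContinuousOn (fun u => |deriv (deriv W) u|) (Set.Icc e b) :=
    (hW.2.2.2.1.mono (fun x hx => ⟨lt_of_lt_of_le he0 hx.1, hx.2⟩)).abs
  obtain ⟨C₂, hC₂⟩ := (isCompact_Icc (a := e) (b := b)).exists_bound_of_continuousOn hcont
  refine ⟨max C 0 + max C₂ 0 * b ^ (2 - α), by positivity, ?_⟩
  intro u hu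
  have hu0 : 0 < u := hu.1
  have hupow : 0 < u ^ (α - 2) := Real.rpow_pos_of_pos hu0 _
  rcases lt_or_ge u e with h | h
  · have : u ∈ Set.Ioo (0:ℝ) ε := ⟨hu0, lt_of_lt_of_le h ((min_le_left _ _).trans (by linarith))⟩
    have hbd := hsub this
    simp only [Set.mem_setOf_eq, Real.norm_eq_abs] at hbd
    have : |deriv (deriv W) u| ≤ C * u ^ (α - 2) := by
      have := hbd
      rwa [abs_of_pos hupow] at this
    calc |deriv (deriv W) u| ≤ C * u ^ (α - 2) := this
      _ ≤ (max C 0) * u ^ (α - 2) := by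
          exact mul_le_mul_of_nonneg_right (le_max_left _ _) hupow.le
      _ ≤ (max C 0 + max C₂ 0 * b ^ (2 - α)) * u ^ (α - 2) := by
          have : (0:ℝ) ≤ max C₂ 0 * b ^ (2 - α) := by positivity
          nlinarith
  · have hub : u ≤ b := hu.2
    have h1 : |deriv (deriv W) u| ≤ C₂ := by
      have := hC₂ u ⟨h, hub⟩
      simpa [Real.norm_eq_abs] using this
    have hbpow : b ^ (α - 2) ≤ u ^ (α - 2) :=
      Real.rpow_le_rpow_of_nonpos hu0 hub (by linarith)
    have hbb : (0:ℝ) < b ^ (α - 2) := Real.rpow_pos_of_pos hb _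
    have key : (1:ℝ) ≤ b ^ (2 - α) * u ^ (α - 2) := by
      have : b ^ (2 - α) * b ^ (α - 2) = 1 := by
        rw [← Real.rpow_add hb]; norm_num
      calc (1:ℝ) = b ^ (2 - α) * b ^ (α - 2) := this.symm
        _ ≤ b ^ (2 - α) * u ^ (α - 2) :=
            mul_le_mul_of_nonneg_left hbpow (by positivity)
    calc |deriv (deriv W) u| ≤ C₂ := h1
      _ ≤ max C₂ 0 := le_max_left _ _
      _ = max C₂ 0 * 1 := (mul_one _).symm
      _ ≤ max C₂ 0 * (b ^ (2 - α) * u ^ (α - 2)) :=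
          mul_le_mul_of_nonneg_left key (le_max_right _ _)
      _ ≤ (max C 0 + max C₂ 0 * b ^ (2 - α)) * u ^ (α - 2) := by
          have h0 : (0:ℝ) ≤ max C 0 := le_max_right _ _
          nlinarith

section
variable {α b : ℝ} {W : ℝ → ℝ} {K : ℝ}

lemma dd_intervalIntegrable (hα1 : 1 < α) (hb : 0 < b)
    (hKb : ∀ u ∈ Set.Ioc (0:ℝ) b, |deriv (deriv W) u| ≤ K * u ^ (α - 2))
    {z : ℝ} (hz : z ∈ Set.Icc (0:ℝ) b) :
    IntervalIntegrable (deriv (deriv W)) volume 0 z := by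
  apply IntervalIntegrable.mono_fun' (g := fun u => K * u ^ (α - 2))
  · exact (intervalIntegral.intervalIntegrable_rpow' (by linarith)).const_mul K
  · exact (measurable_deriv _).aestronglyMeasurable
  · rw [Set.uIoc_of_le hz.1]
    filter_upwards [ae_restrict_mem measurableSet_Ioc] with u hu
    exact hKb u ⟨hu.1, hu.2.trans hz.2⟩

lemma ftc_dd (hα1 : 1 < α) (hb : 0 < b) (hW : MemS α b W)
    (hKb : ∀ u ∈ Set.Ioc (0:ℝ) b, |deriv (deriv W) u| ≤ K * u ^ (α - 2))
    {z : ℝ} (hz : z ∈ Set.Icc (0:ℝ) b) :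
    ∫ u in (0:ℝ)..z, deriv (deriv W) u = deriv W z := by
  rcases eq_or_lt_of_le hz.1 with h0 | h0
  · rw [← h0]; simp [hW.2.2.2.2.2]
  have := intervalIntegral.integral_eq_sub_of_hasDeriv_right_of_le hz.1
    (hW.2.1.mono (fun x hx => ⟨hx.1, hx.2.trans hz.2⟩))
    (fun x hx => ((hW.2.2.1 x ⟨hx.1, hx.2.le.trans hz.2⟩).hasDerivAt).hasDerivWithinAt)
    (dd_intervalIntegrable hα1 hb hKb hz)
  rw [this, hW.2.2.2.2.2, sub_zero]

lemma inner_integrand_integrable (hα1 : 1 < α) (hα2 : α < 2) (hb : 0 < b)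
    (hKb : ∀ u ∈ Set.Ioc (0:ℝ) b, |deriv (deriv W) u| ≤ K * u ^ (α - 2))
    {x : ℝ} (hx : x ∈ Set.Ioc (0:ℝ) b) :
    IntervalIntegrable (fun u => deriv (deriv W) u * (x - u) ^ (1 - α)) volume 0 x := by
  apply IntervalIntegrable.mono_fun' (g := fun u => K * ((x - u) ^ (1 - α) * (u - 0) ^ (α - 2)))
  · exact (kernel_intervalIntegrable (by linarith) (by linarith) (by linarith) (by linarith)
      hx.1).const_mul K
  · exact ((measurable_deriv _).mul
      ((measurable_const.sub measurable_id).pow_const _)).aestronglyMeasurable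
  · rw [Set.uIoc_of_le hx.1.le]
    filter_upwards [ae_restrict_mem measurableSet_Ioc] with u hu
    have hu0 : 0 < u := hu.1
    have hxu : 0 ≤ x - u := by linarith [hu.2]
    have hpow : (0:ℝ) ≤ (x - u) ^ (1 - α) := Real.rpow_nonneg hxu _
    rw [Real.norm_eq_abs, abs_mul, abs_of_nonneg hpow, sub_zero]
    calc |deriv (deriv W) u| * (x - u) ^ (1 - α)
        ≤ (K * u ^ (α - 2)) * (x - u) ^ (1 - α) :=
          mul_le_mul_of_nonneg_right (hKb u ⟨hu0, hu.2.trans hx.2⟩) hpow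
      _ = K * ((x - u) ^ (1 - α) * u ^ (α - 2)) := by ring

lemma inner_integral_bound (hα1 : 1 < α) (hα2 : α < 2) (hb : 0 < b) (hK0 : 0 ≤ K)
    (hKb : ∀ u ∈ Set.Ioc (0:ℝ) b, |deriv (deriv W) u| ≤ K * u ^ (α - 2))
    {x : ℝ} (hx : x ∈ Set.Ioc (0:ℝ) b) :
    ‖∫ u in (0:ℝ)..x, deriv (deriv W) u * (x - u) ^ (1 - α)‖
      ≤ K * ∫ t in (0:ℝ)..1, (1 - t) ^ (1 - α) * t ^ (α - 2) := by
  have hgint : IntervalIntegrable (fun u => K * ((x - u) ^ (1 - α) * (u - 0) ^ (α - 2)))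
      volume 0 x :=
    (kernel_intervalIntegrable (by linarith) (by linarith) (by linarith) (by linarith)
      hx.1).const_mul K
  have hle := intervalIntegral.norm_integral_le_of_norm_le (μ := volume)
      (f := fun u => deriv (deriv W) u * (x - u) ^ (1 - α))
      (g := fun u => K * ((x - u) ^ (1 - α) * (u - 0) ^ (α - 2))) (a := 0) (b := x) hx.1.le ?_ hgint
  · have hB2 : 0 < ∫ t in (0:ℝ)..1, (1 - t) ^ (1 - α) * t ^ (α - 2) :=
      beta_pos (by linarith) (by linarith) (by linarith) (by linarith)
    have hval : ∫ u in (0:ℝ)..x, K * ((x - u) ^ (1 - α) * (u - 0) ^ (α - 2))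
        = K * ∫ t in (0:ℝ)..1, (1 - t) ^ (1 - α) * t ^ (α - 2) := by
      rw [intervalIntegral.integral_const_mul,
        kernel_integral_eq (by linarith) (by linarith) hx.1,
        show (1 - α) + (α - 2) + 1 = 0 by ring, Real.rpow_zero, one_mul]
    rw [hval] at hle
    exact hle
  · filter_upwards with u hu
    have hu0 : 0 < u := hu.1
    have hxu : 0 ≤ x - u := by linarith [hu.2]
    have hpow : (0:ℝ) ≤ (x - u) ^ (1 - α) := Real.rpow_nonneg hxu _
    rw [Real.norm_eq_abs, abs_mul, abs_of_nonneg hpow, sub_zero]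
    calc |deriv (deriv W) u| * (x - u) ^ (1 - α)
        ≤ (K * u ^ (α - 2)) * (x - u) ^ (1 - α) :=
          mul_le_mul_of_nonneg_right (hKb u ⟨hu0, hu.2.trans hx.2⟩) hpow
      _ = K * ((x - u) ^ (1 - α) * u ^ (α - 2)) := by ring

end


lemma fubini_key (hα1 : 1 < α) (hα2 : α < 2) (hb : 0 < b) (hW : MemS α b W) (hK0 : 0 ≤ K)
    (hKb : ∀ u ∈ Set.Ioc (0:ℝ) b, |deriv (deriv W) u| ≤ K * u ^ (α - 2))
    {z : ℝ} (hz : z ∈ Set.Ioc (0:ℝ) b) :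
    IntegrableOn (fun x => (z - x) ^ (α - 2)
        * ∫ u in (0:ℝ)..x, deriv (deriv W) u * (x - u) ^ (1 - α)) (Set.Ioc 0 z) volume ∧
    ∫ x in (0:ℝ)..z, (z - x) ^ (α - 2)
        * ∫ u in (0:ℝ)..x, deriv (deriv W) u * (x - u) ^ (1 - α)
      = (∫ t in (0:ℝ)..1, (1 - t) ^ (α - 2) * t ^ (1 - α)) * deriv W z := by
  have hz0 : (0:ℝ) < z := hz.1
  set μ := volume.restrict (Set.Ioc (0:ℝ) z) with hμ
  set g₀ : ℝ → ℝ → ℝ := fun x u => deriv (deriv W) u * (x - u) ^ (1 - α) with hg₀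
  set Ψ : ℝ × ℝ → ℝ := fun q =>
    if q.2 < q.1 then (z - q.1) ^ (α - 2) * (deriv (deriv W) q.2 * (q.1 - q.2) ^ (1 - α)) else 0
    with hΨdef
  have hmeasΨ : Measurable Ψ := by
    apply Measurable.ite (measurableSet_lt measurable_snd measurable_fst)
    · exact ((measurable_const.sub measurable_fst).pow_const _).mul
        (((measurable_deriv _).comp measurable_snd).mul
          ((measurable_fst.sub measurable_snd).pow_const _))
    · exact measurable_const
  have hslice : ∀ x u, Ψ (x, u)
      = Set.indicator (Set.Iio x) (fun u => (z - x) ^ (α - 2) * g₀ x u) u := by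
    intro x u
    by_cases h : u < x <;> simp [hΨdef, hg₀, Set.indicator_apply, Set.mem_Iio, h]
  have hrestr : ∀ x ∈ Set.Ioc (0:ℝ) z, Set.Iio x ∩ Set.Ioc (0:ℝ) z = Set.Ioo 0 x := by
    intro x hx
    ext u
    constructor
    · rintro ⟨h1, h2, _⟩; exact ⟨h2, h1⟩
    · rintro ⟨h1, h2⟩; exact ⟨h2, h1, by linarith [hx.2]⟩
  have hIoo_int : ∀ x ∈ Set.Ioc (0:ℝ) z, IntegrableOn (g₀ x) (Set.Ioo 0 x) volume := by
    intro x hx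
    have h1 := (inner_integrand_integrable hα1 hα2 hb hKb ⟨hx.1, hx.2.trans hz.2⟩).1
    exact h1.mono_set Set.Ioo_subset_Ioc_self
  have hslice_int : ∀ x ∈ Set.Ioc (0:ℝ) z, Integrable (fun u => Ψ (x, u)) μ := by
    intro x hx
    have hfun : (fun u => Ψ (x, u))
        = (Set.Iio x).indicator (fun u => (z - x) ^ (α - 2) * g₀ x u) :=
      funext (fun u => hslice x u)
    rw [hfun, hμ, integrable_indicator_iff measurableSet_Iio, IntegrableOn,
      Measure.restrict_restrict measurableSet_Iio, hrestr x hx]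
    exact ((hIoo_int x hx).const_mul _)
  have B2pos : 0 < ∫ t in (0:ℝ)..1, (1 - t) ^ (1 - α) * t ^ (α - 2) :=
    beta_pos (by linarith) (by linarith) (by linarith) (by linarith)
  set B2 := ∫ t in (0:ℝ)..1, (1 - t) ^ (1 - α) * t ^ (α - 2) with hB2def
  have habs_bound : ∀ x ∈ Set.Ioc (0:ℝ) z,
      ∫ u, ‖Ψ (x, u)‖ ∂μ ≤ (K * B2) * (z - x) ^ (α - 2) := by
    intro x hx
    have hxb : x ∈ Set.Ioc (0:ℝ) b := ⟨hx.1, hx.2.trans hz.2⟩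
    have hnorm_eq : (fun u => ‖Ψ (x, u)‖)
        = Set.indicator (Set.Iio x) (fun u => (z - x) ^ (α - 2) * ‖g₀ x u‖) := by
      funext u
      rw [hslice x u]
      by_cases h : u ∈ Set.Iio x <;>
        simp [Set.indicator_apply, h, Real.norm_eq_abs, abs_mul,
          abs_of_nonneg (Real.rpow_nonneg (by linarith [hx.2] : (0:ℝ) ≤ z - x) (α - 2))]
    rw [hnorm_eq, hμ, integral_indicator measurableSet_Iio,
      Measure.restrict_restrict measurableSet_Iio, hrestr x hx, integral_const_mul]
    rw [mul_comm (K * B2) ((z - x) ^ (α - 2))]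
    apply mul_le_mul_of_nonneg_left _ (Real.rpow_nonneg (by linarith [hx.2]) _)
    -- ∫ u in Ioo 0 x, ‖g₀ x u‖ ≤ K * B2
    have hmono : ∫ u in Set.Ioo (0:ℝ) x, ‖g₀ x u‖
        ≤ ∫ u in Set.Ioo (0:ℝ) x, K * ((x - u) ^ (1 - α) * u ^ (α - 2)) := by
      apply setIntegral_mono_on ((hIoo_int x hx).norm) _ measurableSet_Ioo
      · intro u hu
        have hpow : (0:ℝ) ≤ (x - u) ^ (1 - α) :=
          Real.rpow_nonneg (by linarith [hu.2]) _
        rw [hg₀, Real.norm_eq_abs, abs_mul, abs_of_nonneg hpow]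
        calc |deriv (deriv W) u| * (x - u) ^ (1 - α)
            ≤ (K * u ^ (α - 2)) * (x - u) ^ (1 - α) :=
              mul_le_mul_of_nonneg_right (hKb u ⟨hu.1, hu.2.le.trans hxb.2⟩) hpow
          _ = K * ((x - u) ^ (1 - α) * u ^ (α - 2)) := by ring
      · apply Integrable.const_mul
        have h2 := (kernel_intervalIntegrable (r := 1 - α) (s := α - 2)
          (by linarith) (by linarith) (by linarith) (by linarith) hx.1).1
        have h3 : IntegrableOn (fun u => (x - u) ^ (1 - α) * (u - 0) ^ (α - 2))
            (Set.Ioo 0 x) volume := h2.mono_set Set.Ioo_subset_Ioc_self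
        simpa [IntegrableOn] using h3
    have hval : ∫ u in Set.Ioo (0:ℝ) x, K * ((x - u) ^ (1 - α) * u ^ (α - 2)) = K * B2 := by
      rw [← integral_Ioc_eq_integral_Ioo, ← intervalIntegral.integral_of_le hx.1.le]
      have : ∀ u, K * ((x - u) ^ (1 - α) * u ^ (α - 2))
          = K * ((x - u) ^ (1 - α) * (u - 0) ^ (α - 2)) := by intro u; rw [sub_zero]
      simp_rw [this]
      rw [intervalIntegral.integral_const_mul, kernel_integral_eq (by linarith) (by linarith)
        hx.1, show (1 - α) + (α - 2) + 1 = 0 by ring, Real.rpow_zero, one_mul]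
    rw [hval] at hmono
    exact hmono
  have hInt : Integrable Ψ (μ.prod μ) := by
    rw [integrable_prod_iff hmeasΨ.aestronglyMeasurable]
    constructor
    · filter_upwards [ae_restrict_mem measurableSet_Ioc] with x hx
      exact hslice_int x hx
    · apply Integrable.mono' (g := fun x => (K * B2) * (z - x) ^ (α - 2))
      · apply Integrable.const_mul
        exact (rpow_sub_intervalIntegrable (r := α - 2) (z := z) (by linarith) 0 z).1
      · exact hmeasΨ.norm.aestronglyMeasurable.integral_prod_right'
      · filter_upwards [ae_restrict_mem measurableSet_Ioc] with x hx
        rw [Real.norm_eq_abs, abs_of_nonneg (integral_nonneg (fun u => norm_nonneg _))]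
        exact habs_bound x hx
  have hswap := MeasureTheory.integral_integral_swap (f := fun x u => Ψ (x, u))
    (μ := μ) (ν := μ) hInt
  -- identify left side
  have hL : ∫ x in (0:ℝ)..z, (z - x) ^ (α - 2) * ∫ u in (0:ℝ)..x, g₀ x u
      = ∫ x, (∫ u, Ψ (x, u) ∂μ) ∂μ := by
    rw [intervalIntegral.integral_of_le hz0.le, hμ]
    apply setIntegral_congr_fun measurableSet_Ioc
    intro x hx
    simp only [hslice]
    rw [integral_indicator measurableSet_Iio,
      Measure.restrict_restrict measurableSet_Iio, hrestr x hx, integral_const_mul,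
      intervalIntegral.integral_of_le hx.1.le, integral_Ioc_eq_integral_Ioo]
  -- identify right side
  have hR : ∫ u, (∫ x, Ψ (x, u) ∂μ) ∂μ
      = (∫ t in (0:ℝ)..1, (1 - t) ^ (α - 2) * t ^ (1 - α)) * deriv W z := by
    have hRslice : ∀ u ∈ Set.Ioo (0:ℝ) z, (∫ x, Ψ (x, u) ∂μ)
        = (∫ t in (0:ℝ)..1, (1 - t) ^ (α - 2) * t ^ (1 - α)) * deriv (deriv W) u := by
      intro u hu
      have hxslice : ∀ x, Ψ (x, u) = Set.indicator (Set.Ioi u)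
          (fun x => deriv (deriv W) u * ((z - x) ^ (α - 2) * (x - u) ^ (1 - α))) x := by
        intro x
        by_cases h : u < x <;>
          simp [hΨdef, Set.indicator_apply, Set.mem_Ioi, h] <;> ring
      have hIoi : Set.Ioi u ∩ Set.Ioc (0:ℝ) z = Set.Ioc u z := by
        ext x
        constructor
        · rintro ⟨h1, _, h3⟩; exact ⟨h1, h3⟩
        · rintro ⟨h1, h2⟩; exact ⟨h1, lt_trans hu.1 h1, h2⟩
      simp only [hxslice]
      rw [hμ, integral_indicator measurableSet_Ioi,
        Measure.restrict_restrict measurableSet_Ioi, hIoi, integral_const_mul]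
      rw [← intervalIntegral.integral_of_le hu.2.le,
        kernel_integral_eq (by linarith) (by linarith) hu.2,
        show (α - 2) + (1 - α) + 1 = 0 by ring, Real.rpow_zero, one_mul]
      ring
    rw [hμ, integral_Ioc_eq_integral_Ioo, setIntegral_congr_fun measurableSet_Ioo hRslice,
      integral_const_mul, ← integral_Ioc_eq_integral_Ioo,
      ← intervalIntegral.integral_of_le hz0.le,
      ftc_dd hα1 hb hW hKb ⟨hz0.le, hz.2⟩]
  constructor
  · have h1 : Integrable (fun x => ∫ u, Ψ (x, u) ∂μ) μ := hInt.integral_prod_left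
    apply h1.congr
    filter_upwards [ae_restrict_mem measurableSet_Ioc] with x hx
    simp only [hslice]
    rw [hμ, integral_indicator measurableSet_Iio,
      Measure.restrict_restrict measurableSet_Iio, hrestr x hx, integral_const_mul,
      intervalIntegral.integral_of_le hx.1.le, integral_Ioc_eq_integral_Ioo]
  · rw [hL, hswap, hR]


lemma W_continuousOn (hW : MemS α b W) : ContinuousOn W (Set.Icc 0 b) :=
  fun x hx => ((hW.1 x hx).continuousAt).continuousWithinAt

lemma A1_intervalIntegrable (hα1 : 1 < α) (hα2 : α < 2) (hb : 0 < b) (hW : MemS α b W)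
    (p : ℝ) {z : ℝ} (hz : z ∈ Set.Ioc (0:ℝ) b) :
    IntervalIntegrable (fun x => (p * W x - x * deriv W x) * (z - x) ^ (α - 2)) volume 0 z := by
  have hz0 : (0:ℝ) < z := hz.1
  have hcont1 : ContinuousOn (fun x => p * W x - x * deriv W x) (Set.Icc 0 z) := by
    apply ContinuousOn.sub
    · exact continuousOn_const.mul
        ((W_continuousOn hW).mono (fun x hx => ⟨hx.1, hx.2.trans hz.2⟩))
    · exact continuousOn_id.mul (hW.2.1.mono (fun x hx => ⟨hx.1, hx.2.trans hz.2⟩))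
  obtain ⟨C, hC⟩ := (isCompact_Icc (a := (0:ℝ)) (b := z)).exists_bound_of_continuousOn hcont1
  apply IntervalIntegrable.mono_fun' (g := fun x => C * (z - x) ^ (α - 2))
  · exact (rpow_sub_intervalIntegrable (by linarith) 0 z).const_mul C
  · rw [Set.uIoc_of_le hz0.le]
    apply AEMeasurable.aestronglyMeasurable
    apply AEMeasurable.mul
    · exact (hcont1.mono Set.Ioc_subset_Icc_self).aemeasurable measurableSet_Ioc
    · exact ((measurable_const.sub measurable_id).pow_const _).aemeasurable
  · rw [Set.uIoc_of_le hz0.le]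
    filter_upwards [ae_restrict_mem measurableSet_Ioc] with x hx
    have hk : (0:ℝ) ≤ (z - x) ^ (α - 2) := Real.rpow_nonneg (by linarith [hx.2]) _
    rw [Real.norm_eq_abs, abs_mul, abs_of_nonneg hk]
    exact mul_le_mul_of_nonneg_right
      (by simpa [Real.norm_eq_abs] using hC x ⟨hx.1.le, hx.2⟩) hk

lemma key_identity {p c : ℝ} (hα1 : 1 < α) (hα2 : α < 2) (hb : 0 < b)
    (hW : MemS α b W) (hWeq : ∀ z ∈ Set.Ioc (0:ℝ) b, FracDE α p c W z)
    {z : ℝ} (hz : z ∈ Set.Ioc (0:ℝ) b) :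
    (c / (α - 1)) * ((∫ t in (0:ℝ)..1, (1 - t) ^ (α - 2) * t ^ (1 - α)) * deriv W z)
      = ∫ x in (0:ℝ)..z, (p * W x - x * deriv W x) * (z - x) ^ (α - 2) := by
  obtain ⟨K, hK0, hKb⟩ := memS_dd_bound hα2 hb hW
  obtain ⟨hIntOn, hFub⟩ := fubini_key hα1 hα2 hb hW hK0 hKb hz
  have hz0 : (0:ℝ) < z := hz.1
  have hpt : ∀ x ∈ Set.Ioc (0:ℝ) z,
      (c / (α - 1)) * ((z - x) ^ (α - 2)
          * ∫ u in (0:ℝ)..x, deriv (deriv W) u * (x - u) ^ (1 - α))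
        = (p * W x - x * deriv W x) * (z - x) ^ (α - 2) := by
    intro x hx
    have hde : x * deriv W x
        + (c / (α - 1)) * (∫ u in (0:ℝ)..x, deriv (deriv W) u * (x - u) ^ (1 - α))
        - p * W x = 0 := hWeq x ⟨hx.1, hx.2.trans hz.2⟩
    have h2 : (c / (α - 1)) * (∫ u in (0:ℝ)..x, deriv (deriv W) u * (x - u) ^ (1 - α))
        = p * W x - x * deriv W x := by linarith
    calc (c / (α - 1)) * ((z - x) ^ (α - 2)
            * ∫ u in (0:ℝ)..x, deriv (deriv W) u * (x - u) ^ (1 - α))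
        = ((c / (α - 1)) * ∫ u in (0:ℝ)..x, deriv (deriv W) u * (x - u) ^ (1 - α))
            * (z - x) ^ (α - 2) := by ring
      _ = (p * W x - x * deriv W x) * (z - x) ^ (α - 2) := by rw [h2]
  calc (c / (α - 1)) * ((∫ t in (0:ℝ)..1, (1 - t) ^ (α - 2) * t ^ (1 - α)) * deriv W z)
      = (c / (α - 1)) * ∫ x in (0:ℝ)..z, (z - x) ^ (α - 2)
          * ∫ u in (0:ℝ)..x, deriv (deriv W) u * (x - u) ^ (1 - α) := by rw [hFub]
    _ = ∫ x in (0:ℝ)..z, (c / (α - 1)) * ((z - x) ^ (α - 2)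
          * ∫ u in (0:ℝ)..x, deriv (deriv W) u * (x - u) ^ (1 - α)) :=
        (intervalIntegral.integral_const_mul _ _).symm
    _ = ∫ x in (0:ℝ)..z, (p * W x - x * deriv W x) * (z - x) ^ (α - 2) := by
        rw [intervalIntegral.integral_of_le hz0.le, intervalIntegral.integral_of_le hz0.le]
        exact setIntegral_congr_fun measurableSet_Ioc hpt


end

theorem uniqueness_fractional_equation
    {α p c b a₀ : ℝ} (hα : α ∈ Set.Ioo (1:ℝ) 2) (hp : p ∈ Set.Ioo 1 α)
    (hc : 0 < c) (hb : 0 < b) {F G : ℝ → ℝ}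
    (hF : MemS α b F) (hG : MemS α b G)
    (hFeq : ∀ z ∈ Set.Ioc (0:ℝ) b, FracDE α p c F z)
    (hGeq : ∀ z ∈ Set.Ioc (0:ℝ) b, FracDE α p c G z)
    (hF0 : F 0 = a₀) (hG0 : G 0 = a₀) :
    ∀ z ∈ Set.Icc (0:ℝ) b, F z = G z := by
  obtain ⟨hα1, hα2⟩ := hα
  obtain ⟨hp1, hpα⟩ := hp
  have hp0 : 0 < p := by linarith
  set D : ℝ → ℝ := fun y => F y - G y with hD
  set d : ℝ → ℝ := fun y => deriv F y - deriv G y with hd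
  set Bq : ℝ := ∫ t in (0:ℝ)..1, (1 - t) ^ (α - 2) * t ^ (1 - α) with hBq
  have hBqpos : 0 < Bq := beta_pos (by linarith) (by linarith) (by linarith) (by linarith)
  set κ : ℝ := (c / (α - 1)) * Bq with hκ
  have hκpos : 0 < κ := mul_pos (div_pos hc (by linarith)) hBqpos
  have hD0 : D 0 = 0 := by simp [hD, hF0, hG0]
  have hd0 : d 0 = 0 := by simp [hd, hF.2.2.2.2.2, hG.2.2.2.2.2]
  have hDcont : ContinuousOn D (Set.Icc 0 b) := (W_continuousOn hF).sub (W_continuousOn hG)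
  have hdcont : ContinuousOn d (Set.Icc 0 b) := hF.2.1.sub hG.2.1
  have hkey : ∀ z ∈ Set.Ioc (0:ℝ) b, κ * d z
      = ∫ x in (0:ℝ)..z, (p * D x - x * d x) * (z - x) ^ (α - 2) := by
    intro z hz
    have h1 := key_identity hα1 hα2 hb hF hFeq hz
    have h2 := key_identity hα1 hα2 hb hG hGeq hz
    have h3 : κ * d z = (c / (α - 1)) * (Bq * deriv F z)
        - (c / (α - 1)) * (Bq * deriv G z) := by
      simp only [hd, hκ]; ring
    rw [h3, h1, h2, ← intervalIntegral.integral_sub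
      (A1_intervalIntegrable hα1 hα2 hb hF p hz) (A1_intervalIntegrable hα1 hα2 hb hG p hz)]
    apply intervalIntegral.integral_congr
    intro x _
    simp only [hD, hd]
    ring
  have hfz : ∀ z ∈ Set.Ioc (0:ℝ) b,
      IntervalIntegrable (fun x => (p * D x - x * d x) * (z - x) ^ (α - 2)) volume 0 z := by
    intro z hz
    have heq : (fun x => (p * D x - x * d x) * (z - x) ^ (α - 2))
        = fun x => (p * F x - x * deriv F x) * (z - x) ^ (α - 2)
            - (p * G x - x * deriv G x) * (z - x) ^ (α - 2) := by
      funext x; simp only [hD, hd]; ring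
    rw [heq]
    exact (A1_intervalIntegrable hα1 hα2 hb hF p hz).sub
      (A1_intervalIntegrable hα1 hα2 hb hG p hz)
  have hDftc : ∀ s z : ℝ, 0 ≤ s → s ≤ z → z ≤ b → ∫ x in s..z, d x = D z - D s := by
    intro s z hs0 hsz hzb
    apply intervalIntegral.integral_eq_sub_of_hasDeriv_right_of_le hsz
    · exact hDcont.mono (fun y hy => ⟨le_trans hs0 hy.1, le_trans hy.2 hzb⟩)
    · intro x hx
      have h1 : HasDerivAt (fun y => F y - G y) (deriv F x - deriv G x) x :=
        ((hF.1 x ⟨le_trans hs0 hx.1.le, le_trans hx.2.le hzb⟩).hasDerivAt).sub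
          ((hG.1 x ⟨le_trans hs0 hx.1.le, le_trans hx.2.le hzb⟩).hasDerivAt)
      exact h1.hasDerivWithinAt
    · apply ContinuousOn.intervalIntegrable
      apply hdcont.mono
      rw [Set.uIcc_of_le hsz]
      exact fun y hy => ⟨le_trans hs0 hy.1, le_trans hy.2 hzb⟩
  have hexδ : ∃ δ : ℝ, 0 < δ ∧
      δ + κ⁻¹ * (p + b) * (δ ^ (α - 1) / (α - 1)) ≤ 1 / 2 := by
    have hcont : ContinuousAt
        (fun δ : ℝ => δ + κ⁻¹ * (p + b) * (δ ^ (α - 1) / (α - 1))) 0 := by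
      apply ContinuousAt.add continuousAt_id
      apply ContinuousAt.mul continuousAt_const
      apply ContinuousAt.div_const
      exact Real.continuousAt_rpow_const 0 (α - 1) (Or.inr (by linarith))
    have ht := hcont.tendsto
    have h00 : (0:ℝ) + κ⁻¹ * (p + b) * ((0:ℝ) ^ (α - 1) / (α - 1)) = 0 := by
      simp [Real.zero_rpow (show α - 1 ≠ 0 by linarith)]
    rw [h00] at ht
    have hev : ∀ᶠ δ in 𝓝 (0:ℝ),
        δ + κ⁻¹ * (p + b) * (δ ^ (α - 1) / (α - 1)) < 1 / 2 := by
      have := ht (Iio_mem_nhds (show (0:ℝ) < 1/2 by norm_num))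
      filter_upwards [this] with y hy using hy
    have hev2 := hev.filter_mono (nhdsWithin_le_nhds (s := Set.Ioi (0:ℝ)))
    obtain ⟨δ, hδlt, hδmem⟩ := (hev2.and eventually_mem_nhdsWithin).exists
    exact ⟨δ, hδmem, hδlt.le⟩
  obtain ⟨δ, hδ0, hδθ⟩ := hexδ
  have main : ∀ n : ℕ, ∀ x ∈ Set.Icc (0:ℝ) (min b ((n:ℝ) * δ)), D x = 0 ∧ d x = 0 := by
    intro n
    induction n with
    | zero =>
      intro x hx
      simp only [Nat.cast_zero, zero_mul] at hx
      rw [min_eq_right hb.le] at hx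
      have hx0 : x = 0 := le_antisymm hx.2 hx.1
      rw [hx0]
      exact ⟨hD0, hd0⟩
    | succ n ih =>
      intro x hx
      rw [Nat.cast_succ] at hx
      set s : ℝ := min b ((n:ℝ) * δ) with hs
      set s' : ℝ := min b (((n:ℝ) + 1) * δ) with hs'
      rcases le_or_gt x s with hxs | hxs
      · exact ih x ⟨hx.1, hxs⟩
      have hs0 : 0 ≤ s := le_min hb.le (by positivity)
      have hsb : s ≤ b := min_le_left _ _
      have hs'b : s' ≤ b := min_le_left _ _
      have hss' : s ≤ s' := by
        apply le_min hsb
        calc s ≤ (n : ℝ) * δ := min_le_right _ _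
          _ ≤ ((n : ℝ) + 1) * δ := by nlinarith [hδ0.le]
      have hxs' : x ≤ s' := hx.2
      have hsltb : s < b := lt_of_lt_of_le hxs (le_trans hxs' hs'b)
      have hsnδ : s = (n:ℝ) * δ := by
        rcases min_choice b ((n:ℝ) * δ) with h | h
        · exfalso; rw [hs] at hsltb; rw [h] at hsltb; exact lt_irrefl b hsltb
        · rw [hs, h]
      have hφcont : ContinuousOn (fun y => |D y| + |d y|) (Set.Icc s s') := by
        apply ContinuousOn.add
        · exact (hDcont.mono (fun y hy => ⟨le_trans hs0 hy.1, le_trans hy.2 hs'b⟩)).abs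
        · exact (hdcont.mono (fun y hy => ⟨le_trans hs0 hy.1, le_trans hy.2 hs'b⟩)).abs
      obtain ⟨x₀, hx₀mem, hx₀max⟩ := isCompact_Icc.exists_isMaxOn
        (Set.nonempty_Icc.mpr hss') hφcont
      set m : ℝ := |D x₀| + |d x₀| with hm
      have hm0 : 0 ≤ m := by rw [hm]; positivity
      have hφle : ∀ y ∈ Set.Icc s s', |D y| + |d y| ≤ m := by
        intro y hy
        have := hx₀max hy
        simpa using this
      have hest : ∀ z ∈ Set.Ioc s s', |D z| + |d z| ≤
          (δ + κ⁻¹ * (p + b) * (δ ^ (α - 1) / (α - 1))) * m := by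
        intro z hz
        have hzs : s < z := hz.1
        have hzs' : z ≤ s' := hz.2
        have hz0 : 0 < z := lt_of_le_of_lt hs0 hzs
        have hzb : z ≤ b := le_trans hzs' hs'b
        have hzmem : z ∈ Set.Ioc (0:ℝ) b := ⟨hz0, hzb⟩
        have hzsδ : z - s ≤ δ := by
          have h2 : s' ≤ ((n:ℝ) + 1) * δ := min_le_right _ _
          have h3 : z ≤ ((n:ℝ) + 1) * δ := le_trans hzs' h2
          rw [hsnδ] at *
          nlinarith
        have hkd := hkey z hzmem
        have hsplit : ∫ x in (0:ℝ)..z, (p * D x - x * d x) * (z - x) ^ (α - 2)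
            = ∫ x in s..z, (p * D x - x * d x) * (z - x) ^ (α - 2) := by
          have hi1 : IntervalIntegrable
              (fun x => (p * D x - x * d x) * (z - x) ^ (α - 2)) volume 0 s := by
            apply (hfz z hzmem).mono_set'
            rw [Set.uIoc_of_le hs0, Set.uIoc_of_le hz0.le]
            exact Set.Ioc_subset_Ioc_right hzs.le
          have hi2 : IntervalIntegrable
              (fun x => (p * D x - x * d x) * (z - x) ^ (α - 2)) volume s z := by
            apply (hfz z hzmem).mono_set'
            rw [Set.uIoc_of_le hzs.le, Set.uIoc_of_le hz0.le]
            exact Set.Ioc_subset_Ioc_left hs0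
          have hadj := intervalIntegral.integral_add_adjacent_intervals hi1 hi2
          have h0 : ∫ x in (0:ℝ)..s, (p * D x - x * d x) * (z - x) ^ (α - 2) = 0 := by
            rw [intervalIntegral.integral_of_le hs0]
            rw [setIntegral_congr_fun measurableSet_Ioc (g := fun _ => (0:ℝ)) ?_]
            · simp
            · intro y hy
              obtain ⟨hDy, hdy⟩ := ih y ⟨hy.1.le, hy.2⟩
              simp [hDy, hdy]
          rw [← hadj, h0, zero_add]
        have hbound : ‖∫ x in s..z, (p * D x - x * d x) * (z - x) ^ (α - 2)‖
            ≤ (p + b) * m * ((z - s) ^ (α - 1) / (α - 1)) := by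
          have hgint : IntervalIntegrable
              (fun x => ((p + b) * m) * (z - x) ^ (α - 2)) volume s z :=
            (rpow_sub_intervalIntegrable (by linarith) s z).const_mul _
          have h := intervalIntegral.norm_integral_le_of_norm_le (μ := volume)
            (f := fun x => (p * D x - x * d x) * (z - x) ^ (α - 2))
            (g := fun x => ((p + b) * m) * (z - x) ^ (α - 2)) (a := s) (b := z) hzs.le ?_ hgint
          · have hgval : ∫ x in s..z, ((p + b) * m) * (z - x) ^ (α - 2)
                = (p + b) * m * ((z - s) ^ (α - 1) / (α - 1)) := by
              rw [intervalIntegral.integral_const_mul]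
              congr 1
              have hsub := intervalIntegral.integral_comp_sub_left (a := s) (b := z)
                (fun t => t ^ (α - 2)) z
              simp only [sub_self] at hsub
              rw [hsub, integral_rpow (Or.inl (by linarith : (-1:ℝ) < α - 2)),
                Real.zero_rpow (by linarith : α - 2 + 1 ≠ 0),
                show α - 2 + 1 = α - 1 by ring]
              ring
            rw [hgval] at h
            have hnn : (0:ℝ) ≤ (p + b) * m * ((z - s) ^ (α - 1) / (α - 1)) := by
              apply mul_nonneg (mul_nonneg (by linarith) hm0)
              apply div_nonneg (Real.rpow_nonneg (by linarith) _) (by linarith)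
            exact h
          · filter_upwards with y hy
            have hys : s < y := hy.1
            have hyz : y ≤ z := hy.2
            have hy0 : 0 ≤ y := le_trans hs0 hys.le
            have hyb : y ≤ b := le_trans hyz hzb
            have hym : y ∈ Set.Icc s s' := ⟨hys.le, le_trans hyz hzs'⟩
            have hDy : |D y| ≤ m :=
              le_trans (le_add_of_nonneg_right (abs_nonneg _)) (hφle y hym)
            have hdy : |d y| ≤ m :=
              le_trans (le_add_of_nonneg_left (abs_nonneg _)) (hφle y hym)
            have hk : (0:ℝ) ≤ (z - y) ^ (α - 2) := Real.rpow_nonneg (by linarith) _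
            rw [Real.norm_eq_abs, abs_mul, abs_of_nonneg hk]
            apply mul_le_mul_of_nonneg_right _ hk
            have htri : |p * D y - y * d y| ≤ p * |D y| + y * |d y| := by
              calc |p * D y - y * d y| ≤ |p * D y| + |y * d y| := abs_sub _ _
                _ = p * |D y| + y * |d y| := by
                    rw [abs_mul, abs_mul, abs_of_pos hp0, abs_of_nonneg hy0]
            have h1 : p * |D y| ≤ p * m := mul_le_mul_of_nonneg_left hDy hp0.le
            have h2 : y * |d y| ≤ b * m :=
              mul_le_mul hyb hdy (abs_nonneg _) hb.le
            calc |p * D y - y * d y| ≤ p * |D y| + y * |d y| := htri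
              _ ≤ p * m + b * m := add_le_add h1 h2
              _ = (p + b) * m := by ring
        have hdz : |d z| ≤ κ⁻¹ * (p + b) * (δ ^ (α - 1) / (α - 1)) * m := by
          have h1 : κ * |d z| = |κ * d z| := by rw [abs_mul, abs_of_pos hκpos]
          have h2 : |κ * d z| ≤ (p + b) * m * ((z - s) ^ (α - 1) / (α - 1)) := by
            rw [hkd, hsplit, ← Real.norm_eq_abs]
            exact hbound
          have h3 : (z - s) ^ (α - 1) ≤ δ ^ (α - 1) :=
            Real.rpow_le_rpow (by linarith) hzsδ (by linarith)
          have h4 : κ * |d z| ≤ (p + b) * m * (δ ^ (α - 1) / (α - 1)) := by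
            rw [h1]
            refine h2.trans ?_
            apply mul_le_mul_of_nonneg_left _ (mul_nonneg (by linarith) hm0)
            exact (div_le_div_iff_of_pos_right (by linarith)).mpr h3
          calc |d z| = κ⁻¹ * (κ * |d z|) := by
                rw [inv_mul_cancel_left₀ (ne_of_gt hκpos)]
            _ ≤ κ⁻¹ * ((p + b) * m * (δ ^ (α - 1) / (α - 1))) :=
                mul_le_mul_of_nonneg_left h4 (inv_nonneg.mpr hκpos.le)
            _ = κ⁻¹ * (p + b) * (δ ^ (α - 1) / (α - 1)) * m := by ring
        have hDz : |D z| ≤ δ * m := by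
          have hDs : D s = 0 := (ih s ⟨hs0, le_refl s⟩).1
          have hint := hDftc s z hs0 hzs.le hzb
          rw [hDs, sub_zero] at hint
          have hb1 := intervalIntegral.norm_integral_le_of_norm_le_const (C := m)
            (f := d) (a := s) (b := z) ?_
          · rw [hint, Real.norm_eq_abs] at hb1
            have habs : |z - s| ≤ δ := by
              rw [abs_of_nonneg (by linarith)]; exact hzsδ
            calc |D z| ≤ m * |z - s| := hb1
              _ ≤ m * δ := mul_le_mul_of_nonneg_left habs hm0
              _ = δ * m := mul_comm _ _
          · intro y hy
            rw [Set.uIoc_of_le hzs.le] at hy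
            rw [Real.norm_eq_abs]
            exact le_trans (le_add_of_nonneg_left (abs_nonneg _))
              (hφle y ⟨hy.1.le, le_trans hy.2 hzs'⟩)
        calc |D z| + |d z|
            ≤ δ * m + κ⁻¹ * (p + b) * (δ ^ (α - 1) / (α - 1)) * m := add_le_add hDz hdz
          _ = (δ + κ⁻¹ * (p + b) * (δ ^ (α - 1) / (α - 1))) * m := by ring
      have hmz : m = 0 := by
        rcases eq_or_lt_of_le hx₀mem.1 with he | hlt
        · obtain ⟨h1, h2⟩ := ih x₀ ⟨le_trans hs0 he.le, he.ge⟩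
          rw [hm, h1, h2]; simp
        · have h1 := hest x₀ ⟨hlt, hx₀mem.2⟩
          rw [← hm] at h1
          have h2 : m ≤ (1/2) * m :=
            le_trans h1 (mul_le_mul_of_nonneg_right hδθ hm0)
          linarith
      have hx' : |D x| + |d x| ≤ m := hφle x ⟨hxs.le, hxs'⟩
      rw [hmz] at hx'
      constructor
      · have h1 : |D x| = 0 := le_antisymm (by linarith [abs_nonneg (d x)]) (abs_nonneg _)
        exact abs_eq_zero.mp h1
      · have h1 : |d x| = 0 := le_antisymm (by linarith [abs_nonneg (D x)]) (abs_nonneg _)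
        exact abs_eq_zero.mp h1
  intro z hz
  obtain ⟨n, hn⟩ := exists_nat_ge (b / δ)
  have hbn : b ≤ (n:ℝ) * δ := by
    rw [div_le_iff₀ hδ0] at hn
    linarith
  have hz' := (main n z ⟨hz.1, by rw [min_eq_left hbn]; exact hz.2⟩).1
  have hz'' : F z - G z = 0 := hz'
  linarith
end

section
/- Let α ∈ (1,2), p ∈ (1,α), c > 0, b > 0, a₀ ∈ ℝ, and suppose F belongs to the class S_b, satisfies z F'(z) + (c/(α−1)) ∫₀^z F''(x) (z−x)^{1−α} dx − p F(z) = 0 for all z ∈ (0,b], and F(0) = a₀. Define φ(z) = ∫₀^z F''(x) (z−x)^{1−α} dx for z ∈ (0,b]. Then φ satisfies the Volterra integral equation of the second kind ∫₀^z K(z,x) φ(x) dx + φ(z) = p(α−1)a₀/c for all z ∈ (0,b], where the weakly singular kernel K is given by K(z,x) = ((α−1)/(c Γ(α) Γ(2−α))) · ((α−1−p)z + p x)/(z−x)^{2−α} for 0 < x < z ≤ b. -/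
open Set Filter MeasureTheory Asymptotics Topology

noncomputable section


namespace VolterraAux

/-- Interval integrability of beta-type integrands. -/
lemma betaInt {r s : ℝ} (hr : -1 < r) (hs : -1 < s) {t z : ℝ} (htz : t < z) :
    IntervalIntegrable (fun x => (x - t) ^ r * (z - x) ^ s) volume t z := by
  have hm1 : t < (t + z) / 2 := by linarith
  have hm2 : (t + z) / 2 < z := by linarith
  have h1 : IntervalIntegrable (fun x => (x - t) ^ r * (z - x) ^ s) volume t ((t+z)/2) := by
    have base : IntervalIntegrable (fun x : ℝ => x ^ r) volume 0 ((t+z)/2 - t) :=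
      intervalIntegral.intervalIntegrable_rpow' hr
    have base2 := base.comp_sub_right t
    simp only [zero_add, sub_add_cancel] at base2
    apply base2.mul_continuousOn
    apply ContinuousOn.rpow_const (by fun_prop)
    intro x hx
    rw [uIcc_of_le hm1.le] at hx
    exact Or.inl (ne_of_gt (by linarith [hx.2]))
  have h2 : IntervalIntegrable (fun x => (x - t) ^ r * (z - x) ^ s) volume ((t+z)/2) z := by
    have base : IntervalIntegrable (fun x : ℝ => x ^ s) volume 0 (z - (t+z)/2) :=
      intervalIntegral.intervalIntegrable_rpow' hs
    have base2 := (base.comp_sub_left z).symm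
    simp only [sub_zero, sub_sub_cancel] at base2
    apply base2.continuousOn_mul
    apply ContinuousOn.rpow_const (by fun_prop)
    intro x hx
    rw [uIcc_of_le hm2.le] at hx
    exact Or.inl (ne_of_gt (by linarith [hx.1]))
  exact h1.trans h2

lemma beta01 {r s : ℝ} (hr : -1 < r) (hs : -1 < s) :
    ∫ x in (0:ℝ)..1, x ^ r * (1 - x) ^ s
      = Real.Gamma (r+1) * Real.Gamma (s+1) / Real.Gamma (r+s+2) := by
  have hu : 0 < ((r:ℂ) + 1).re := by simp; linarith
  have hv : 0 < ((s:ℂ) + 1).re := by simp; linarith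
  have key := Complex.Gamma_mul_Gamma_eq_betaIntegral hu hv
  have hbeta : Complex.betaIntegral ((r:ℂ)+1) ((s:ℂ)+1)
      = ((∫ x in (0:ℝ)..1, x ^ r * (1 - x) ^ s : ℝ) : ℂ) := by
    rw [Complex.betaIntegral, ← intervalIntegral.integral_ofReal]
    apply intervalIntegral.integral_congr
    intro x hx
    dsimp only
    rw [uIcc_of_le zero_le_one] at hx
    have h0 : (0:ℝ) ≤ x := hx.1
    have h1 : (0:ℝ) ≤ 1 - x := by linarith [hx.2]
    rw [show ((r:ℂ) + 1 - 1) = (r:ℂ) by ring, show ((s:ℂ) + 1 - 1) = (s:ℂ) by ring]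
    rw [show (1 - (x:ℂ)) = ((1 - x : ℝ) : ℂ) by push_cast; ring]
    rw [← Complex.ofReal_cpow h0, ← Complex.ofReal_cpow h1]
    push_cast
    ring
  have e1 : ((r:ℂ)+1) = ((r+1 : ℝ) : ℂ) := by push_cast; ring
  have e2 : ((s:ℂ)+1) = ((s+1 : ℝ) : ℂ) := by push_cast; ring
  have e3 : ((r:ℂ)+1+((s:ℂ)+1)) = ((r+s+2 : ℝ) : ℂ) := by push_cast; ring
  rw [hbeta, e1, e2] at key
  rw [show ((r+1:ℝ):ℂ) + ((s+1:ℝ):ℂ) = ((r+s+2 : ℝ) : ℂ) by push_cast; ring] at key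
  rw [Complex.Gamma_ofReal, Complex.Gamma_ofReal, Complex.Gamma_ofReal] at key
  have keyR : Real.Gamma (r+1) * Real.Gamma (s+1)
      = Real.Gamma (r+s+2) * ∫ x in (0:ℝ)..1, x ^ r * (1 - x) ^ s := by exact_mod_cast key
  have hne : Real.Gamma (r+s+2) ≠ 0 := (Real.Gamma_pos_of_pos (by linarith)).ne'
  field_simp
  linarith [keyR]

lemma betaEval {r s : ℝ} (hr : -1 < r) (hs : -1 < s) {t z : ℝ} (htz : t < z) :
    ∫ x in t..z, (x - t) ^ r * (z - x) ^ s
      = (z - t) ^ (r + s + 1) *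
        (Real.Gamma (r+1) * Real.Gamma (s+1) / Real.Gamma (r+s+2)) := by
  have hc : 0 < z - t := sub_pos.2 htz
  have step1 : (∫ x in t..z, (x - t) ^ r * (z - x) ^ s)
      = ∫ u in (0:ℝ)..(z-t), u ^ r * (z - t - u) ^ s := by
    have h := intervalIntegral.integral_comp_sub_right (a := t) (b := z)
      (fun u => u ^ r * (z - t - u) ^ s) t
    simp only [sub_self] at h
    rw [← h]
    apply intervalIntegral.integral_congr
    intro x _
    dsimp only
    rw [show z - t - (x - t) = z - x by ring]
  have h1 := intervalIntegral.integral_comp_mul_left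
    (a := (0:ℝ)) (b := 1) (fun u => u ^ r * (z - t - u) ^ s) (ne_of_gt hc)
  simp only [mul_zero, mul_one] at h1
  have step2 : ∫ u in (0:ℝ)..(z-t), u ^ r * (z - t - u) ^ s
      = (z - t) * ∫ v in (0:ℝ)..1, ((z-t)*v) ^ r * (z - t - (z-t)*v) ^ s := by
    rw [h1, smul_eq_mul]
    field_simp
  have h3 : ∀ v ∈ uIcc (0:ℝ) 1, ((z-t)*v) ^ r * (z - t - (z-t)*v) ^ s
      = ((z-t)^r * (z-t)^s) * (v ^ r * (1 - v) ^ s) := by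
    intro v hv
    rw [uIcc_of_le zero_le_one] at hv
    rw [show z - t - (z-t)*v = (z-t)*(1-v) by ring,
       Real.mul_rpow hc.le hv.1, Real.mul_rpow hc.le (by linarith [hv.2])]
    ring
  rw [step1, step2, intervalIntegral.integral_congr h3,
    intervalIntegral.integral_const_mul, beta01 hr hs]
  rw [show r + s + 1 = 1 + (r + s) by ring, Real.rpow_add hc, Real.rpow_one,
    Real.rpow_add hc]
  ring

end VolterraAux


namespace VolterraAux2

lemma globalBound {α b : ℝ} (hα2 : α < 2) (hb : 0 < b) {g : ℝ → ℝ}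
    (hcont : ContinuousOn g (Ioc 0 b))
    (hO : g =O[𝓝[>] (0:ℝ)] fun z => z ^ (α - 2)) :
    ∃ C : ℝ, ∀ t ∈ Ioc (0:ℝ) b, |g t| ≤ C * t ^ (α - 2) := by
  obtain ⟨C₀, hC₀⟩ := hO.bound
  obtain ⟨δ, hδpos, hδ⟩ := mem_nhdsGT_iff_exists_Ioc_subset.mp hC₀
  have hbase : ∀ t ∈ Ioc (0:ℝ) δ, |g t| ≤ C₀ * t ^ (α - 2) := by
    intro t ht
    have := hδ ht
    simp only [Set.mem_setOf_eq, Real.norm_eq_abs] at this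
    rwa [abs_of_pos (Real.rpow_pos_of_pos ht.1 _)] at this
  by_cases hδb : b ≤ δ
  · exact ⟨C₀, fun t ht => hbase t ⟨ht.1, ht.2.trans hδb⟩⟩
  · push_neg at hδb
    have hδ0 : (0:ℝ) < δ := hδpos
    obtain ⟨M, hM⟩ := (isCompact_Icc (a := δ) (b := b)).exists_bound_of_continuousOn
      (hcont.mono (fun x hx => ⟨lt_of_lt_of_le hδ0 hx.1, hx.2⟩))
    refine ⟨max C₀ ((max M 0) * b ^ (2 - α)), fun t ht => ?_⟩
    have htp : (0:ℝ) < t ^ (α - 2) := Real.rpow_pos_of_pos ht.1 _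
    by_cases htδ : t ≤ δ
    · calc |g t| ≤ C₀ * t ^ (α - 2) := hbase t ⟨ht.1, htδ⟩
        _ ≤ max C₀ ((max M 0) * b ^ (2 - α)) * t ^ (α - 2) :=
          mul_le_mul_of_nonneg_right (le_max_left _ _) htp.le
    · push_neg at htδ
      have h1 : |g t| ≤ M := by simpa using hM t ⟨htδ.le, ht.2⟩
      have h2 : b ^ (α - 2) ≤ t ^ (α - 2) :=
        Real.rpow_le_rpow_of_nonpos ht.1 ht.2 (by linarith)
      have h3 : b ^ (2 - α) * b ^ (α - 2) = 1 := by
        rw [← Real.rpow_add hb]; norm_num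
      have h4 : (0:ℝ) ≤ max M 0 := le_max_right _ _
      have h5 : (0:ℝ) < b ^ (2 - α) := Real.rpow_pos_of_pos hb _
      calc |g t| ≤ max M 0 := le_trans h1 (le_max_left _ _)
        _ = (max M 0 * b ^ (2 - α)) * b ^ (α - 2) := by rw [mul_assoc, h3, mul_one]
        _ ≤ (max M 0 * b ^ (2 - α)) * t ^ (α - 2) :=
          mul_le_mul_of_nonneg_left h2 (mul_nonneg h4 h5.le)
        _ ≤ max C₀ ((max M 0) * b ^ (2 - α)) * t ^ (α - 2) :=
          mul_le_mul_of_nonneg_right (le_max_right _ _) htp.le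

lemma gIntegrable {α b : ℝ} (hα1 : 1 < α) (hα2 : α < 2) (hb : 0 < b) {g : ℝ → ℝ}
    (hgm : Measurable g)
    (hcont : ContinuousOn g (Ioc 0 b))
    (hO : g =O[𝓝[>] (0:ℝ)] fun z => z ^ (α - 2))
    {z : ℝ} (hz : z ∈ Ioc (0:ℝ) b) {s : ℝ} (hs : -1 < s)
    {h : ℝ → ℝ} (hh : ContinuousOn h (Icc 0 z)) :
    IntervalIntegrable (fun t => g t * h t * (z - t) ^ s) volume 0 z := by
  obtain ⟨C, hC⟩ := globalBound hα2 hb hcont hO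
  obtain ⟨H, hH⟩ := isCompact_Icc.exists_bound_of_continuousOn hh
  rw [intervalIntegrable_iff_integrableOn_Ioc_of_le hz.1.le]
  have hdom : IntegrableOn (fun t => (C * H) * (t ^ (α-2) * (z - t) ^ s)) (Ioc 0 z) volume := by
    have hbi : IntervalIntegrable (fun t => (t - 0) ^ (α-2) * (z - t) ^ s) volume 0 z :=
      VolterraAux.betaInt (by linarith) hs hz.1
    simp only [sub_zero] at hbi
    exact ((intervalIntegrable_iff_integrableOn_Ioc_of_le hz.1.le).1 hbi).const_mul _
  apply Integrable.mono' hdom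
  · exact ((hgm.aestronglyMeasurable.mul
      ((hh.mono Ioc_subset_Icc_self).aestronglyMeasurable measurableSet_Ioc)).mul
      ((measurable_const.sub measurable_id).pow_const s).aestronglyMeasurable)
  · rw [ae_restrict_iff' measurableSet_Ioc]
    refine ae_of_all _ fun t ht => ?_
    have h1 : |g t| ≤ C * t ^ (α-2) := hC t ⟨ht.1, ht.2.trans hz.2⟩
    have h2 : |h t| ≤ H := by simpa using hH t ⟨ht.1.le, ht.2⟩
    have h3 : (0:ℝ) ≤ (z - t) ^ s := Real.rpow_nonneg (by linarith [ht.2]) _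
    calc ‖g t * h t * (z-t)^s‖ = |g t| * |h t| * (z-t)^s := by
          rw [Real.norm_eq_abs, abs_mul, abs_mul, abs_of_nonneg h3]
      _ ≤ (C * t^(α-2)) * H * (z-t)^s := by
          apply mul_le_mul_of_nonneg_right _ h3
          exact mul_le_mul h1 h2 (abs_nonneg _) (le_trans (abs_nonneg _) h1)
      _ = (C * H) * (t^(α-2) * (z-t)^s) := by ring

end VolterraAux2

namespace VolterraAux3

open VolterraAux VolterraAux2

lemma fubini_swap {α b : ℝ} (hα1 : 1 < α) (hα2 : α < 2) (hb : 0 < b) {g : ℝ → ℝ}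
    (hgm : Measurable g) (hcont : ContinuousOn g (Ioc 0 b))
    (hO : g =O[𝓝[>] (0:ℝ)] fun z => z ^ (α - 2))
    {z : ℝ} (hz : z ∈ Ioc (0:ℝ) b) {q : ℝ → ℝ} (hq : Continuous q) :
    ∫ x in (0:ℝ)..z, (q x * (z - x) ^ (α-2)) * (∫ t in (0:ℝ)..x, g t * (x - t) ^ (1-α))
      = ∫ t in (0:ℝ)..z, g t * (∫ x in t..z, q x * ((x - t) ^ (1-α) * (z - x) ^ (α-2))) := by
  have h0z : 0 < z := hz.1
  set μ := volume.restrict (Ioc (0:ℝ) z) with hμ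
  set f : ℝ → ℝ → ℝ := fun x t =>
    if t < x then (q x * (z - x) ^ (α-2)) * (g t * (x - t) ^ (1-α)) else 0 with hf
  have hfm : AEStronglyMeasurable (Function.uncurry f) (μ.prod μ) := by
    apply Measurable.aestronglyMeasurable
    show Measurable fun p : ℝ × ℝ =>
      if p.2 < p.1 then (q p.1 * (z - p.1) ^ (α-2)) * (g p.2 * (p.1 - p.2) ^ (1-α)) else 0
    apply Measurable.ite
    · exact measurableSet_lt measurable_snd measurable_fst
    · exact ((hq.measurable.comp measurable_fst).mul
        ((measurable_const.sub measurable_fst).pow_const _)).mul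
        ((hgm.comp measurable_snd).mul ((measurable_fst.sub measurable_snd).pow_const _))
    · exact measurable_const
  have hsetT : ∀ t ∈ Ioc (0:ℝ) z, Ioi t ∩ Ioc 0 z = Ioc t z := by
    intro t ht
    ext x; simp only [mem_inter_iff, mem_Ioi, mem_Ioc]
    constructor
    · rintro ⟨h1, _, h3⟩; exact ⟨h1, h3⟩
    · rintro ⟨h1, h2⟩; exact ⟨h1, ht.1.trans h1, h2⟩
  have hindT : ∀ t : ℝ, (fun x => f x t) = (Ioi t).indicator
      (fun x => (q x * (z - x) ^ (α-2)) * (g t * (x - t) ^ (1-α))) := by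
    intro t; funext x
    by_cases hx : t < x <;> simp [hf, Set.indicator_apply, mem_Ioi, hx]
  have hIOn : ∀ t : ℝ, t < z → IntegrableOn
      (fun x => (q x * (z - x) ^ (α-2)) * (g t * (x - t) ^ (1-α))) (Ioc t z) volume := by
    intro t htz'
    have hbi := (betaInt (r := 1-α) (s := α-2) (by linarith) (by linarith) htz')
    have hbi2 := hbi.mul_continuousOn (g := fun x => q x * g t) (by fun_prop)
    rw [intervalIntegrable_iff_integrableOn_Ioc_of_le htz'.le] at hbi2
    apply hbi2.congr_fun _ measurableSet_Ioc
    intro x _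
    dsimp only
    ring
  have hsect : ∀ t ∈ Ioc (0:ℝ) z, Integrable (fun x => f x t) μ := by
    intro t ht
    rw [hindT t, hμ, integrable_indicator_iff measurableSet_Ioi, IntegrableOn,
      Measure.restrict_restrict measurableSet_Ioi, hsetT t ht]
    rcases eq_or_lt_of_le ht.2 with h | h
    · rw [h, Set.Ioc_self]; exact integrableOn_empty
    · exact hIOn t h
  have hBeta : ∀ t : ℝ, t < z →
      (∫ x in t..z, (x - t) ^ (1-α) * (z - x) ^ (α-2))
        = Real.Gamma (2-α) * Real.Gamma (α-1) := by
    intro t ht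
    rw [betaEval (by linarith) (by linarith) ht,
      show (1-α) + (α-2) + 1 = 0 by ring, Real.rpow_zero, one_mul,
      show (1-α) + 1 = 2-α by ring, show (α-2) + 1 = α-1 by ring,
      show (1-α) + (α-2) + 2 = 1 by ring, Real.Gamma_one, div_one]
  obtain ⟨M, hM⟩ := (isCompact_Icc (a := (0:ℝ)) (b := z)).exists_bound_of_continuousOn
    hq.continuousOn
  have hg1 : IntervalIntegrable g volume 0 z := by
    have h := gIntegrable hα1 hα2 hb hgm hcont hO hz (s := 0) (by norm_num)
      (h := fun _ => (1:ℝ)) continuousOn_const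
    have heq : (fun t => g t * 1 * (z - t) ^ (0:ℝ)) = g := by
      funext t; rw [Real.rpow_zero]; ring
    rwa [heq] at h
  have hne : ∀ᵐ t ∂μ, t ≠ z := by
    apply ae_restrict_of_ae
    rw [ae_iff]
    simp only [ne_eq, not_not, Set.setOf_eq_eq_singleton]
    exact measure_singleton z
  have hnormint : Integrable (fun t => ∫ x, ‖f x t‖ ∂μ) μ := by
    have hdom : Integrable
        (fun t => ‖g t‖ * (M * (Real.Gamma (2-α) * Real.Gamma (α-1)))) μ := by
      exact (((intervalIntegrable_iff_integrableOn_Ioc_of_le h0z.le).1 hg1).norm).mul_const _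
    apply Integrable.mono' hdom
    · exact (hfm.norm.prod_swap).integral_prod_right'
    · filter_upwards [ae_restrict_mem measurableSet_Ioc, hne] with t ht htne
      have htz' : t < z := lt_of_le_of_ne ht.2 htne
      have key : ∫ x, ‖f x t‖ ∂μ = ∫ x in Ioc t z,
          ‖(q x * (z - x) ^ (α-2)) * (g t * (x - t) ^ (1-α))‖ ∂volume := by
        have hindn : (fun x => ‖f x t‖) = (Ioi t).indicator
            (fun x => ‖(q x * (z - x) ^ (α-2)) * (g t * (x - t) ^ (1-α))‖) := by
          funext x
          by_cases hx : t < x <;> simp [hf, Set.indicator_apply, mem_Ioi, hx]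
        rw [hindn, integral_indicator measurableSet_Ioi, hμ,
          Measure.restrict_restrict measurableSet_Ioi, hsetT t ht]
      have hmono : ∫ x in Ioc t z,
            ‖(q x * (z - x) ^ (α-2)) * (g t * (x - t) ^ (1-α))‖ ∂volume
          ≤ ∫ x in Ioc t z,
            (‖g t‖ * M) * ((x - t) ^ (1-α) * (z - x) ^ (α-2)) ∂volume := by
        apply setIntegral_mono_on ((hIOn t htz').norm)
        · have hbi := (betaInt (r := 1-α) (s := α-2) (by linarith) (by linarith) htz').const_mul
            (‖g t‖ * M)
          rwa [intervalIntegrable_iff_integrableOn_Ioc_of_le htz'.le] at hbi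
        · exact measurableSet_Ioc
        · intro x hx
          have hxt : (0:ℝ) ≤ x - t := by linarith [hx.1]
          have hzx : (0:ℝ) ≤ z - x := by linarith [hx.2]
          have hq1 : |q x| ≤ M := by
            have := hM x ⟨le_trans ht.1.le hx.1.le, hx.2⟩
            simpa using this
          have e1 : ‖(q x * (z - x) ^ (α-2)) * (g t * (x - t) ^ (1-α))‖
              = (|q x| * (z - x) ^ (α-2)) * (|g t| * (x - t) ^ (1-α)) := by
            rw [Real.norm_eq_abs, abs_mul, abs_mul, abs_mul,
              abs_of_nonneg (Real.rpow_nonneg hzx _), abs_of_nonneg (Real.rpow_nonneg hxt _)]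
          rw [e1]
          have h2 : (0:ℝ) ≤ ((z - x) ^ (α-2)) * (|g t| * (x - t) ^ (1-α)) := by positivity
          calc (|q x| * (z - x) ^ (α-2)) * (|g t| * (x - t) ^ (1-α))
              = |q x| * (((z - x) ^ (α-2)) * (|g t| * (x - t) ^ (1-α))) := by ring
            _ ≤ M * (((z - x) ^ (α-2)) * (|g t| * (x - t) ^ (1-α))) :=
                mul_le_mul_of_nonneg_right hq1 h2
            _ = (‖g t‖ * M) * ((x - t) ^ (1-α) * (z - x) ^ (α-2)) := by
                rw [Real.norm_eq_abs]; ring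
      have heval : ∫ x in Ioc t z,
            (‖g t‖ * M) * ((x - t) ^ (1-α) * (z - x) ^ (α-2)) ∂volume
          = (‖g t‖ * M) * (Real.Gamma (2-α) * Real.Gamma (α-1)) := by
        rw [← intervalIntegral.integral_of_le htz'.le, intervalIntegral.integral_const_mul,
          hBeta t htz']
      have hnn : 0 ≤ ∫ x, ‖f x t‖ ∂μ := integral_nonneg (fun x => norm_nonneg _)
      rw [Real.norm_eq_abs, abs_of_nonneg hnn, key]
      calc _ ≤ _ := hmono
        _ = _ := heval
        _ = ‖g t‖ * (M * (Real.Gamma (2-α) * Real.Gamma (α-1))) := by ring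
  have hint : Integrable (Function.uncurry f) (μ.prod μ) := by
    rw [integrable_prod_iff' hfm]
    constructor
    · filter_upwards [ae_restrict_mem measurableSet_Ioc] with t ht
      exact hsect t ht
    · exact hnormint
  have hswap := MeasureTheory.integral_integral_swap hint
  have hLHS : ∫ x in (0:ℝ)..z, (q x * (z - x) ^ (α-2)) *
        (∫ t in (0:ℝ)..x, g t * (x - t) ^ (1-α))
      = ∫ x, (∫ t, f x t ∂μ) ∂μ := by
    rw [intervalIntegral.integral_of_le h0z.le]
    apply setIntegral_congr_fun measurableSet_Ioc
    intro x hx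
    dsimp only
    symm
    have hind : (fun t => f x t) = (Iio x).indicator
        (fun t => (q x * (z - x) ^ (α-2)) * (g t * (x - t) ^ (1-α))) := by
      funext t
      by_cases hxt : t < x <;> simp [hf, Set.indicator_apply, mem_Iio, hxt]
    have hset : Iio x ∩ Ioc 0 z = Ioo 0 x := by
      ext u; simp only [mem_inter_iff, mem_Iio, mem_Ioo, mem_Ioc]
      constructor
      · rintro ⟨h1, h2, _⟩; exact ⟨h2, h1⟩
      · rintro ⟨h1, h2⟩; exact ⟨h2, h1, le_trans (le_of_lt h2) hx.2⟩
    rw [hind, integral_indicator measurableSet_Iio, hμ,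
      Measure.restrict_restrict measurableSet_Iio, hset,
      ← integral_Ioc_eq_integral_Ioo, ← intervalIntegral.integral_of_le hx.1.le]
    exact intervalIntegral.integral_const_mul _ _
  have hRHS : ∫ t, (∫ x, f x t ∂μ) ∂μ
      = ∫ t in (0:ℝ)..z, g t * (∫ x in t..z, q x * ((x - t) ^ (1-α) * (z - x) ^ (α-2))) := by
    rw [intervalIntegral.integral_of_le h0z.le]
    apply setIntegral_congr_fun measurableSet_Ioc
    intro t ht
    dsimp only
    rw [hindT t, integral_indicator measurableSet_Ioi, hμ,
      Measure.restrict_restrict measurableSet_Ioi, hsetT t ht,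
      ← intervalIntegral.integral_of_le ht.2, ← intervalIntegral.integral_const_mul]
    apply intervalIntegral.integral_congr
    intro x _
    dsimp only
    ring
  rw [hLHS, hswap, hRHS]

end VolterraAux3

theorem reduction_to_volterra_equation
    {α p c b a₀ : ℝ} (hα : α ∈ Set.Ioo (1:ℝ) 2) (hp : p ∈ Set.Ioo 1 α)
    (hc : 0 < c) (hb : 0 < b) {F : ℝ → ℝ}
    (hF : MemS α b F)
    (hFeq : ∀ z ∈ Set.Ioc (0:ℝ) b, FracDE α p c F z)
    (hF0 : F 0 = a₀) :
    let φ : ℝ → ℝ := fun z => ∫ t in (0:ℝ)..z, deriv (deriv F) t * (z - t) ^ (1 - α)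
    let K : ℝ → ℝ → ℝ := fun z x =>
      ((α - 1) / (c * Real.Gamma α * Real.Gamma (2 - α))) *
        (((α - 1 - p) * z + p * x) / (z - x) ^ (2 - α))
    ∀ z ∈ Set.Ioc (0:ℝ) b,
      (∫ x in (0:ℝ)..z, K z x * φ x) + φ z = p * (α - 1) * a₀ / c := by
  obtain ⟨hα1, hα2⟩ := hα
  obtain ⟨hp1, hpα⟩ := hp
  obtain ⟨hF1, hF2, hF3, hF4, hF5, hF6⟩ := hF
  intro φ K z hz
  obtain ⟨h0z, hzb⟩ := hz
  show (∫ x in (0:ℝ)..z,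
      (((α - 1) / (c * Real.Gamma α * Real.Gamma (2 - α))) *
        (((α - 1 - p) * z + p * x) / (z - x) ^ (2 - α))) *
      (∫ t in (0:ℝ)..x, deriv (deriv F) t * (x - t) ^ (1 - α)))
    + (∫ t in (0:ℝ)..z, deriv (deriv F) t * (z - t) ^ (1 - α))
    = p * (α - 1) * a₀ / c
  set g : ℝ → ℝ := deriv (deriv F) with hg
  set C : ℝ := (α - 1) / (c * Real.Gamma α * Real.Gamma (2 - α)) with hC
  have hα1' : (α:ℝ) - 1 ≠ 0 := ne_of_gt (by linarith)
  have hΓ1 : Real.Gamma (α - 1) ≠ 0 := (Real.Gamma_pos_of_pos (by linarith)).ne'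
  have hΓ2 : Real.Gamma (2 - α) ≠ 0 := (Real.Gamma_pos_of_pos (by linarith)).ne'
  have hgm : Measurable g := by rw [hg]; exact measurable_deriv _
  have hzIoc : z ∈ Set.Ioc (0:ℝ) b := ⟨h0z, hzb⟩
  -- integrability of g and t * g
  have hg1 : IntervalIntegrable g volume 0 z := by
    have h := VolterraAux2.gIntegrable hα1 hα2 hb hgm hF4 hF5 hzIoc (s := 0) (by norm_num)
      (h := fun _ => (1:ℝ)) continuousOn_const
    have heq : (fun t => g t * 1 * (z - t) ^ (0:ℝ)) = g := by
      funext t; rw [Real.rpow_zero]; ring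
    rwa [heq] at h
  have hg2 : IntervalIntegrable (fun t => t * g t) volume 0 z := by
    have h := VolterraAux2.gIntegrable hα1 hα2 hb hgm hF4 hF5 hzIoc (s := 0) (by norm_num)
      (h := fun t => t) continuousOn_id
    have heq : (fun t => g t * t * (z - t) ^ (0:ℝ)) = fun t => t * g t := by
      funext t; rw [Real.rpow_zero]; ring
    rwa [heq] at h
  -- FTC facts
  have hcontF' : ContinuousOn (deriv F) (Set.Icc 0 z) := hF2.mono (Icc_subset_Icc_right hzb)
  have hcontF : ContinuousOn F (Set.Icc 0 z) := fun x hx =>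
    (hF1 x ⟨hx.1, hx.2.trans hzb⟩).continuousAt.continuousWithinAt
  have hL1 : ∫ t in (0:ℝ)..z, g t = deriv F z := by
    have h := intervalIntegral.integral_eq_sub_of_hasDeriv_right_of_le h0z.le hcontF'
      (fun t ht => (hF3 t ⟨ht.1, ht.2.le.trans hzb⟩).hasDerivAt.hasDerivWithinAt) hg1
    rw [h, hF6, sub_zero]
  have hL2 : ∫ t in (0:ℝ)..z, t * g t = z * deriv F z - F z + a₀ := by
    have hderiv : ∀ t ∈ Set.Ioo (0:ℝ) z,
        HasDerivWithinAt (fun t => t * deriv F t - F t) (t * g t) (Set.Ioi t) t := by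
      intro t ht
      have h1 : HasDerivAt (deriv F) (g t) t := (hF3 t ⟨ht.1, ht.2.le.trans hzb⟩).hasDerivAt
      have h2 : HasDerivAt F (deriv F t) t :=
        (hF1 t ⟨ht.1.le, ht.2.le.trans hzb⟩).hasDerivAt
      have h3 := ((hasDerivAt_id t).mul h1).sub h2
      simp only [id_eq] at h3
      have he : (1:ℝ) * deriv F t + t * g t - deriv F t = t * g t := by ring
      rw [he] at h3
      exact h3.hasDerivWithinAt
    have h := intervalIntegral.integral_eq_sub_of_hasDeriv_right_of_le h0z.le
      ((continuousOn_id.mul hcontF').sub hcontF) hderiv hg2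
    simp only [Pi.mul_apply, Pi.sub_apply, id_eq] at h
    rw [h, hF0]
    ring
  -- Step A: rewrite the kernel
  have hA : (∫ x in (0:ℝ)..z, (C * (((α-1-p)*z + p*x) / (z-x) ^ (2-α))) *
        (∫ t in (0:ℝ)..x, g t * (x-t) ^ (1-α)))
      = C * ∫ x in (0:ℝ)..z, (((α-1-p)*z + p*x) * (z-x) ^ (α-2)) *
        (∫ t in (0:ℝ)..x, g t * (x-t) ^ (1-α)) := by
    rw [← intervalIntegral.integral_const_mul]
    apply intervalIntegral.integral_congr
    intro x hx
    rw [Set.uIcc_of_le h0z.le] at hx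
    dsimp only
    rw [div_eq_mul_inv, ← Real.rpow_neg (by linarith [hx.2] : (0:ℝ) ≤ z - x),
      show -(2-α) = α - 2 by ring]
    ring
  -- Fubini
  have hFub := VolterraAux3.fubini_swap hα1 hα2 hb hgm hF4 hF5 hzIoc
      (q := fun x => (α - 1 - p) * z + p * x) (by continuity)
  have hFub' : (∫ x in (0:ℝ)..z, (((α-1-p)*z + p*x) * (z-x) ^ (α-2)) *
        (∫ t in (0:ℝ)..x, g t * (x-t) ^ (1-α)))
      = ∫ t in (0:ℝ)..z, g t *
        (∫ x in t..z, ((α-1-p)*z + p*x) * ((x-t) ^ (1-α) * (z-x) ^ (α-2))) := hFub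
  -- inner beta evaluation
  have hGamma3 : Real.Gamma (3-α) = (2-α) * Real.Gamma (2-α) := by
    rw [show (3-α : ℝ) = (2-α) + 1 by ring, Real.Gamma_add_one (by linarith)]
  set D : ℝ := Real.Gamma (2-α) * Real.Gamma (α-1) * (α-1) with hD
  have hInner : ∀ t : ℝ, t < z →
      (∫ x in t..z, ((α-1-p)*z + p*x) * ((x-t) ^ (1-α) * (z-x) ^ (α-2)))
        = D * (z - p*(z-t)) := by
    intro t htz'
    have hsplitEq : ∀ x ∈ Set.uIcc t z,
        ((α-1-p)*z + p*x) * ((x-t) ^ (1-α) * (z-x) ^ (α-2))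
          = (((α-1-p)*z + p*t)) * ((x-t) ^ (1-α) * (z-x) ^ (α-2))
            + p * ((x-t) ^ (2-α) * (z-x) ^ (α-2)) := by
      intro x hx
      rw [Set.uIcc_of_le htz'.le] at hx
      rcases eq_or_lt_of_le hx.1 with h | h
      · rw [← h]
        simp only [sub_self]
        rw [Real.zero_rpow (by linarith : (1-α:ℝ) ≠ 0),
          Real.zero_rpow (by linarith : (2-α:ℝ) ≠ 0)]
        ring
      · have he : (x - t) ^ (2-α) = (x - t) * (x - t) ^ (1-α) := by
          rw [show (2-α : ℝ) = 1 + (1-α) by ring, Real.rpow_add (by linarith), Real.rpow_one]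
        rw [he]; ring
    rw [intervalIntegral.integral_congr hsplitEq,
      intervalIntegral.integral_add
        ((VolterraAux.betaInt (by linarith) (by linarith) htz').const_mul _)
        ((VolterraAux.betaInt (by linarith) (by linarith) htz').const_mul _),
      intervalIntegral.integral_const_mul, intervalIntegral.integral_const_mul,
      VolterraAux.betaEval (r := 1-α) (s := α-2) (by linarith) (by linarith) htz',
      VolterraAux.betaEval (r := 2-α) (s := α-2) (by linarith) (by linarith) htz',
      show (1-α) + (α-2) + 1 = 0 by ring, show (2-α) + (α-2) + 1 = 1 by ring,
      Real.rpow_zero, Real.rpow_one,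
      show (1-α) + 1 = 2-α by ring, show (α-2) + 1 = α-1 by ring,
      show (2-α) + 1 = 3-α by ring,
      show (1-α) + (α-2) + 2 = 1 by ring, show (2-α) + (α-2) + 2 = 2 by ring,
      Real.Gamma_one, Real.Gamma_two, div_one, div_one, hGamma3, hD]
    ring
  -- evaluate the t-integral
  have hC2 : (∫ t in (0:ℝ)..z, g t *
        (∫ x in t..z, ((α-1-p)*z + p*x) * ((x-t) ^ (1-α) * (z-x) ^ (α-2))))
      = D * (z * deriv F z - p * (F z - a₀)) := by
    have hne : ∀ᵐ t : ℝ, t ≠ z := by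
      rw [ae_iff]
      simp only [ne_eq, not_not, Set.setOf_eq_eq_singleton]
      exact measure_singleton z
    have hstep : (∫ t in (0:ℝ)..z, g t *
          (∫ x in t..z, ((α-1-p)*z + p*x) * ((x-t) ^ (1-α) * (z-x) ^ (α-2))))
        = ∫ t in (0:ℝ)..z, ((D*(1-p)*z) * g t + (D*p) * (t * g t)) := by
      apply intervalIntegral.integral_congr_ae
      filter_upwards [hne] with t htne ht
      rw [Set.uIoc_of_le h0z.le] at ht
      have htz' : t < z := lt_of_le_of_ne ht.2 htne
      rw [hInner t htz']
      ring
    rw [hstep, intervalIntegral.integral_add (hg1.const_mul _) (hg2.const_mul _),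
      intervalIntegral.integral_const_mul, intervalIntegral.integral_const_mul, hL1, hL2]
    ring
  -- the equation for φ z
  have heq := hFeq z ⟨h0z, hzb⟩
  unfold FracDE at heq
  rw [← hg] at heq
  have e : c / (α - 1) * (∫ t in (0:ℝ)..z, g t * (z - t) ^ (1-α))
      = p * F z - z * deriv F z := by linarith
  have hone : (α - 1) / c * (c / (α - 1)) = 1 := by field_simp
  have hI : (∫ t in (0:ℝ)..z, g t * (z - t) ^ (1-α))
      = (α - 1) / c * (p * F z - z * deriv F z) := by
    rw [← e, ← mul_assoc, hone, one_mul]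
  have hGα : Real.Gamma α = (α - 1) * Real.Gamma (α - 1) := by
    have h := Real.Gamma_add_one (s := α - 1) hα1'
    rw [sub_add_cancel] at h
    exact h
  have hCD : C * D = (α - 1) / c := by
    rw [hC, hD, hGα]
    field_simp
  rw [hA, hFub', hC2, hI, ← mul_assoc, hCD]
  field_simp
  ring
end
end

section
/- Let α ∈ (0,1), let c₊ ≥ 0 and c₋ ≥ 0, and let F : [0,∞) → ℝ be twice continuously differentiable with F' and F'' bounded, |F'(y)| = O(y^γ) as y → ∞ for some γ < α−1, and |F(y)| = O(y^δ) as y → ∞ for some δ < α−1. Then for every y > 0 the following three expressions are well defined and equal: (Itô form) ∫₀^y (F(y−x) − F(y)) c₊ x^{−1−α} dx + c₊(F(0) − F(y))/(α y^α) + ∫₀^∞ (F(y+x) − F(y)) c₋ x^{−1−α} dx; (Riemann–Liouville form) −(c₊/α) (d/dy) ∫₀^y F(x)(y−x)^{−α} dx + c₊ F(0)/(α y^α) + (c₋/α) (d/dy) ∫_y^∞ F(x)(x−y)^{−α} dx; (Caputo form) −(c₊/α) ∫₀^y F'(x)(y−x)^{−α} dx + (c₋/α) ∫_y^∞ F'(x)(x−y)^{−α}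 dx. -/
open Set Filter MeasureTheory Asymptotics Topology

noncomputable section

namespace GenThree

lemma ker_int {β y : ℝ} (hβ : -1 < β) :
    IntervalIntegrable (fun x => (y - x) ^ β) volume 0 y := by
  have h := (intervalIntegral.intervalIntegrable_rpow' (a := 0) (b := y) hβ).comp_sub_left y
  simpa using h.symm

lemma I1 {h : ℝ → ℝ} {y β : ℝ} (hy : 0 < y) (hβ : -1 < β)
    (hd : ∀ x ∈ Icc (0:ℝ) y, HasDerivAt h (deriv h x) x)
    (hc' : ContinuousOn (deriv h) (Icc 0 y)) :
    ∫ x in (0:ℝ)..y, h x * (y - x) ^ β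
      = h 0 * y ^ (β + 1) / (β + 1)
        + (1 / (β + 1)) * ∫ x in (0:ℝ)..y, deriv h x * (y - x) ^ (β + 1) := by
  set p := β + 1 with hpdef
  have hp : 0 < p := by rw [hpdef]; linarith
  have hch : ContinuousOn h (Icc 0 y) := fun x hx => (hd x hx).continuousAt.continuousWithinAt
  have hcv : ContinuousOn (fun x : ℝ => (y - x) ^ p) (Icc 0 y) := by
    intro x hx
    exact ((Real.continuousAt_rpow_const (y - x) p (Or.inr hp.le)).comp
      ((continuous_const.sub continuous_id).continuousAt)).continuousWithinAt
  set w : ℝ → ℝ := fun x => h x * (-(y - x) ^ p / p) with hw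
  have hcw : ContinuousOn w (Icc 0 y) := hch.mul ((hcv.neg).div_const p)
  have hderiv : ∀ x ∈ Ioo (0:ℝ) y, HasDerivAt w
      (deriv h x * (-(y - x) ^ p / p) + h x * (y - x) ^ β) x := by
    intro x hx
    have hyx : (0:ℝ) < y - x := by linarith [hx.2]
    have hv : HasDerivAt (fun x : ℝ => (y - x) ^ p) (p * (y - x) ^ (p - 1) * (-1)) x :=
      (Real.hasDerivAt_rpow_const (Or.inl hyx.ne')).comp x ((hasDerivAt_id x).const_sub y)
    have hx' : x ∈ Icc (0:ℝ) y := ⟨hx.1.le, hx.2.le⟩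
    have hmul := (hd x hx').mul ((hv.neg).div_const p)
    convert hmul using 1
    any_goals rfl
    have hpe : p - 1 = β := by rw [hpdef]; ring
    rw [hpe]
    simp only [Pi.neg_apply]
    field_simp
  have hint1 : IntervalIntegrable (fun x => deriv h x * (-(y - x) ^ p / p)) volume 0 y := by
    apply ContinuousOn.intervalIntegrable
    rw [uIcc_of_le hy.le]
    exact hc'.mul ((hcv.neg).div_const p)
  have hint2 : IntervalIntegrable (fun x => h x * (y - x) ^ β) volume 0 y := by
    have := (ker_int (y := y) hβ).continuousOn_mul (g := h) (by rw [uIcc_of_le hy.le]; exact hch)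
    exact this
  have hFTC := intervalIntegral.integral_eq_sub_of_hasDerivAt_of_le hy.le hcw hderiv
    (hint1.add hint2)
  rw [intervalIntegral.integral_add hint1 hint2] at hFTC
  have hwy : w y = 0 := by simp [hw, Real.zero_rpow hp.ne']
  have hw0 : w 0 = h 0 * (-(y:ℝ) ^ p / p) := by simp [hw]
  have h1 : (∫ x in (0:ℝ)..y, deriv h x * (-(y - x) ^ p / p))
      = (-(1/p)) * ∫ x in (0:ℝ)..y, deriv h x * (y - x) ^ p := by
    rw [← intervalIntegral.integral_const_mul]
    apply intervalIntegral.integral_congr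
    intro x _
    ring
  rw [h1, hwy, hw0] at hFTC
  have hp' : p ≠ 0 := hp.ne'
  field_simp at hFTC ⊢
  linarith [hFTC]

lemma shift_integral (f : ℝ → ℝ) (w : ℝ) :
    ∫ x in Ioi w, f x = ∫ u in Ioi (0:ℝ), f (u + w) := by
  have hpre : (fun x : ℝ => x + w) ⁻¹' (Ioi w) = Ioi 0 := by ext u; simp
  rw [← (measurePreserving_add_right volume w).setIntegral_preimage_emb
      (measurableEmbedding_addRight w) f (Ioi w), hpre]

lemma shift_integrableOn {f : ℝ → ℝ} {w : ℝ} :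
    IntegrableOn (fun u => f (u + w)) (Ioi 0) ↔ IntegrableOn f (Ioi w) := by
  have hpre : (fun x : ℝ => x + w) ⁻¹' (Ioi w) = Ioi 0 := by ext u; simp
  have h := (measurePreserving_add_right volume w).integrableOn_comp_preimage
      (measurableEmbedding_addRight w) (f := f) (s := Ioi w)
  rw [hpre] at h
  exact h

lemma bound_integrable {α M C R ρ : ℝ} (hα0 : 0 < α) (hα1 : α < 1) (hR : 0 < R) (hρ : ρ - α < -1) :
    IntegrableOn (fun u : ℝ => if u ≤ R then M * u ^ (-α) else C * u ^ (ρ - α)) (Ioi 0) := by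
  rw [← Ioc_union_Ioi_eq_Ioi hR.le]
  apply IntegrableOn.union
  · apply IntegrableOn.congr_fun (f := fun u : ℝ => M * u ^ (-α)) ?_ ?_ measurableSet_Ioc
    · exact (intervalIntegrable_iff_integrableOn_Ioc_of_le hR.le).mp
        ((intervalIntegral.intervalIntegrable_rpow' (by linarith)).const_mul M)
    · intro u hu; simp [hu.2]
  · apply IntegrableOn.congr_fun (f := fun u : ℝ => C * u ^ (ρ - α)) ?_ ?_ measurableSet_Ioi
    · exact (integrableOn_Ioi_rpow_of_lt hρ hR).const_mul C
    · intro u hu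
      have : ¬ (u ≤ R) := not_le.mpr hu
      simp [this]

lemma int_shift_kernel {g : ℝ → ℝ} {α w M C R ρ : ℝ} (hα0 : 0 < α) (hα1 : α < 1) (hw : 0 < w)
    (hgc : ContinuousOn g (Ici 0)) (hM : ∀ x ∈ Ici (0:ℝ), |g x| ≤ M)
    (hR : 1 ≤ R) (hdec : ∀ x, R ≤ x → |g x| ≤ C * x ^ ρ) (hρ : ρ - α < -1) :
    IntegrableOn (fun u => g (u + w) * u ^ (-α)) (Ioi 0) := by
  have hM0 : 0 ≤ M := le_trans (abs_nonneg _) (hM 0 (mem_Ici.mpr le_rfl))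
  have hρ0 : ρ ≤ 0 := by linarith
  have hR0 : (0:ℝ) < R := lt_of_lt_of_le one_pos hR
  have hC0 : 0 ≤ C := by
    have h1 := (abs_nonneg (g R)).trans (hdec R le_rfl)
    have h2 : (0:ℝ) < R ^ ρ := Real.rpow_pos_of_pos hR0 ρ
    nlinarith
  have hmeas : AEStronglyMeasurable (fun u => g (u + w) * u ^ (-α))
      (volume.restrict (Ioi 0)) := by
    apply ContinuousOn.aestronglyMeasurable ?_ measurableSet_Ioi
    intro u hu
    have hu0 : (0:ℝ) < u := hu
    have h1 : ContinuousWithinAt (fun u : ℝ => g (u + w)) (Ioi 0) u :=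
      (hgc.comp (continuous_id.add continuous_const).continuousOn
        (fun x hx => by
          have hx0 : (0:ℝ) < x := hx
          simp only [id_eq, mem_Ici, Pi.add_apply]
          linarith)) u hu
    exact h1.mul ((Real.continuousAt_rpow_const u (-α) (Or.inl hu0.ne')).continuousWithinAt)
  apply Integrable.mono (bound_integrable (M := M) (C := C) hα0 hα1 hR0 hρ) hmeas
  rw [ae_restrict_iff' measurableSet_Ioi]
  filter_upwards with u hu
  have hu0 : (0:ℝ) < u := hu
  have hk : 0 ≤ u ^ (-α) := Real.rpow_nonneg hu0.le _
  by_cases hcase : u ≤ R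
  · rw [if_pos hcase, Real.norm_eq_abs, Real.norm_eq_abs,
      abs_of_nonneg (mul_nonneg hM0 hk), abs_mul, abs_of_nonneg hk]
    exact mul_le_mul_of_nonneg_right (hM _ (mem_Ici.mpr (by linarith))) hk
  · have huR : R ≤ u := (not_le.mp hcase).le
    have h1 : |g (u + w)| ≤ C * (u + w) ^ ρ := hdec _ (le_trans huR (by linarith))
    have h2 : (u + w) ^ ρ ≤ u ^ ρ :=
      Real.rpow_le_rpow_of_nonpos hu0 (by linarith) hρ0
    have hcρ : 0 ≤ C * u ^ (ρ - α) := mul_nonneg hC0 (Real.rpow_nonneg hu0.le _)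
    rw [if_neg hcase, Real.norm_eq_abs, Real.norm_eq_abs, abs_of_nonneg hcρ,
      abs_mul, abs_of_nonneg hk]
    have h3 : |g (u + w)| * u ^ (-α) ≤ C * u ^ ρ * u ^ (-α) := by
      apply mul_le_mul_of_nonneg_right _ hk
      exact h1.trans (mul_le_mul_of_nonneg_left h2 hC0)
    calc |g (u + w)| * u ^ (-α) ≤ C * u ^ ρ * u ^ (-α) := h3
      _ = C * u ^ (ρ - α) := by
          rw [sub_eq_add_neg, Real.rpow_add hu0]; ring

lemma hasDerivAt_max_rpow {p : ℝ} (hp : 1 < p) (s x : ℝ) :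
    HasDerivAt (fun w : ℝ => (max (w - s) 0) ^ p) (p * (max (x - s) 0) ^ (p - 1)) x := by
  rcases lt_trichotomy x s with h | rfl | h
  · -- x < s : locally zero
    have hval : p * (max (x - s) 0) ^ (p - 1) = 0 := by
      rw [max_eq_right (by linarith : x - s ≤ 0), Real.zero_rpow (by linarith : p - 1 ≠ 0)]
      ring
    rw [hval]
    have hev : (fun w : ℝ => (max (w - s) 0) ^ p) =ᶠ[𝓝 x] fun _ => (0:ℝ) ^ p := by
      filter_upwards [Iio_mem_nhds h] with w hw
      rw [max_eq_right (by simpa using hw.le : w - s ≤ 0)]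
    exact (hasDerivAt_const x ((0:ℝ) ^ p)).congr_of_eventuallyEq hev
  · -- x = s
    have hval : p * (max (x - x) 0) ^ (p - 1) = 0 := by
      rw [sub_self, max_self, Real.zero_rpow (by linarith : p - 1 ≠ 0)]; ring
    rw [hval, hasDerivAt_iff_isLittleO]
    simp only [sub_self, max_self, Real.zero_rpow (by positivity : p ≠ 0), smul_zero, sub_zero]
    have hO : (fun w : ℝ => (max (w - x) 0) ^ p)
        =O[𝓝 x] fun w => |w - x| ^ (p - 1) * (w - x) := by
      rw [Asymptotics.isBigO_iff]
      refine ⟨1, Eventually.of_forall fun w => ?_⟩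
      rw [one_mul, Real.norm_eq_abs, Real.norm_eq_abs, abs_mul, abs_of_nonneg
        (Real.rpow_nonneg (abs_nonneg _) _), abs_of_nonneg
        (Real.rpow_nonneg (le_max_right _ _) _)]
      rcases eq_or_ne w x with rfl | hw
      · simp [Real.zero_rpow (by positivity : p ≠ 0)]
      · have h1 : max (w - x) 0 ≤ |w - x| := max_le (le_abs_self _) (abs_nonneg _)
        have h2 : (max (w - x) 0) ^ p ≤ |w - x| ^ p :=
          Real.rpow_le_rpow (le_max_right _ _) h1 (by positivity)
        have h3 : |w - x| ^ p = |w - x| ^ (p - 1) * |w - x| := by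
          nth_rewrite 3 [← Real.rpow_one (|w - x|)]
          rw [← Real.rpow_add (abs_pos.mpr (sub_ne_zero.mpr hw))]
          norm_num
        exact h2.trans (le_of_eq h3)
    have ho : (fun w : ℝ => |w - x| ^ (p - 1) * (w - x)) =o[𝓝 x] fun w => w - x := by
      have h1 : (fun w : ℝ => |w - x| ^ (p - 1)) =o[𝓝 x] (fun _ => (1:ℝ)) := by
        rw [isLittleO_one_iff]
        have : Tendsto (fun w : ℝ => |w - x|) (𝓝 x) (𝓝 0) := by
          have hcc : Continuous (fun w : ℝ => |w - x|) :=
            (continuous_id.sub continuous_const).abs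
          simpa using hcc.tendsto x
        have hc : ContinuousAt (fun t : ℝ => t ^ (p - 1)) 0 :=
          Real.continuousAt_rpow_const 0 (p - 1) (Or.inr (by linarith))
        have := hc.tendsto.comp this
        simpa [Function.comp_def, Real.zero_rpow (by linarith : p - 1 ≠ 0)] using this
      have := h1.mul_isBigO (isBigO_refl (fun w : ℝ => w - x) (𝓝 x))
      simpa using this
    exact hO.trans_isLittleO ho
  · -- s < x : locally (w - s) ^ p
    have hx0 : (0:ℝ) < x - s := by linarith
    have hd : HasDerivAt (fun w : ℝ => (w - s) ^ p) (p * (x - s) ^ (p - 1) * 1) x :=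
      by convert (Real.hasDerivAt_rpow_const (p := p) (Or.inl hx0.ne')).comp x ((hasDerivAt_id' x).sub_const s) using 1 <;> rfl
    have hev : (fun w : ℝ => (max (w - s) 0) ^ p) =ᶠ[𝓝 x] fun w => (w - s) ^ p := by
      filter_upwards [Ioi_mem_nhds h] with w hw
      rw [max_eq_left (by simp only [mem_Ioi] at hw; linarith : (0:ℝ) ≤ w - s)]
    have := hd.congr_of_eventuallyEq hev
    rw [max_eq_left hx0.le]
    simpa using this

lemma integral_Ioc_max {g : ℝ → ℝ} {p w Y : ℝ} (hp : 0 < p) (hw0 : 0 ≤ w) (hwY : w ≤ Y) :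
    ∫ s in Ioc (0:ℝ) Y, g s * (max (w - s) 0) ^ p = ∫ s in (0:ℝ)..w, g s * (w - s) ^ p := by
  rw [intervalIntegral.integral_of_le hw0]
  have h1 : ∫ s in Ioc (0:ℝ) Y, g s * (max (w - s) 0) ^ p
      = ∫ s in Ioc (0:ℝ) Y, (Ioc (0:ℝ) w).indicator (fun s => g s * (max (w - s) 0) ^ p) s := by
    apply setIntegral_congr_fun measurableSet_Ioc
    intro s hs
    show g s * (max (w - s) 0) ^ p
      = (Ioc (0:ℝ) w).indicator (fun s => g s * (max (w - s) 0) ^ p) s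
    by_cases hsw : s ≤ w
    · rw [indicator_of_mem (show s ∈ Ioc (0:ℝ) w from ⟨hs.1, hsw⟩)]
    · rw [indicator_of_notMem (fun hmem : s ∈ Ioc (0:ℝ) w => hsw hmem.2)]
      rw [max_eq_right (by linarith [not_le.mp hsw] : w - s ≤ 0),
        Real.zero_rpow hp.ne']
      ring
  rw [h1, setIntegral_indicator measurableSet_Ioc]
  have h2 : Ioc (0:ℝ) Y ∩ Ioc 0 w = Ioc 0 w := by
    rw [Ioc_inter_Ioc]
    simp [min_eq_right hwY]
  rw [h2]
  apply setIntegral_congr_fun measurableSet_Ioc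
  intro s hs
  show g s * (max (w - s) 0) ^ p = g s * (w - s) ^ p
  rw [max_eq_left (by linarith [hs.2] : (0:ℝ) ≤ w - s)]

lemma gp_hasDerivAt {F : ℝ → ℝ} {α y M2 : ℝ} (hα0 : 0 < α) (hα1 : α < 1) (hy : 0 < y)
    (hd1 : ∀ x ∈ Set.Ici (0:ℝ), DifferentiableAt ℝ F x)
    (hc1 : ContinuousOn (deriv F) (Set.Ici 0))
    (hd2 : ∀ x ∈ Set.Ici (0:ℝ), DifferentiableAt ℝ (deriv F) x)
    (hc2 : ContinuousOn (deriv (deriv F)) (Set.Ici 0))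
    (hb2 : ∀ x ∈ Set.Ici (0:ℝ), |deriv (deriv F) x| ≤ M2) :
    HasDerivAt (fun w => ∫ x in (0:ℝ)..w, F x * (w - x) ^ (-α))
      (F 0 * y ^ (-α) + ∫ x in (0:ℝ)..y, deriv F x * (y - x) ^ (-α)) y := by
  have h1α : (0:ℝ) < 1 - α := by linarith
  have h2α : (0:ℝ) < 2 - α := by linarith
  set Y : ℝ := y + 1 with hYdef
  have hyY : y < Y := by rw [hYdef]; linarith
  have hY0 : (0:ℝ) < Y := by linarith
  set F'' : ℝ → ℝ := deriv (deriv F) with hF''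
  set KK : ℝ → ℝ := fun w => ∫ s in Ioc (0:ℝ) Y, F'' s * (max (w - s) 0) ^ (2 - α) with hKK
  set P : ℝ → ℝ := fun w => F 0 * w ^ (1 - α) / (1 - α)
      + deriv F 0 * w ^ (2 - α) / ((1 - α) * (2 - α))
      + (1 / ((1 - α) * (2 - α))) * KK w with hP
  -- generic I1 consequences
  have hI1F : ∀ w : ℝ, 0 < w → ∫ x in (0:ℝ)..w, F x * (w - x) ^ (-α)
      = F 0 * w ^ (1 - α) / (1 - α)
        + (1 / (1 - α)) * ∫ x in (0:ℝ)..w, deriv F x * (w - x) ^ (1 - α) := by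
    intro w hw
    have := I1 (h := F) (y := w) (β := -α) hw (by linarith)
      (fun x hx => (hd1 x (mem_Ici.mpr hx.1)).hasDerivAt)
      (hc1.mono (fun x hx => mem_Ici.mpr hx.1))
    rwa [show (-α + 1 : ℝ) = 1 - α by ring] at this
  have hI1F' : ∀ w : ℝ, 0 < w → ∫ x in (0:ℝ)..w, deriv F x * (w - x) ^ (1 - α)
      = deriv F 0 * w ^ (2 - α) / (2 - α)
        + (1 / (2 - α)) * ∫ x in (0:ℝ)..w, F'' x * (w - x) ^ (2 - α) := by
    intro w hw
    have := I1 (h := deriv F) (y := w) (β := 1 - α) hw (by linarith)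
      (fun x hx => (hd2 x (mem_Ici.mpr hx.1)).hasDerivAt)
      (hc2.mono (fun x hx => mem_Ici.mpr hx.1))
    rwa [show (1 - α + 1 : ℝ) = 2 - α by ring] at this
  have hI1Fneg : ∀ w : ℝ, 0 < w → ∫ x in (0:ℝ)..w, deriv F x * (w - x) ^ (-α)
      = deriv F 0 * w ^ (1 - α) / (1 - α)
        + (1 / (1 - α)) * ∫ x in (0:ℝ)..w, F'' x * (w - x) ^ (1 - α) := by
    intro w hw
    have := I1 (h := deriv F) (y := w) (β := -α) hw (by linarith)
      (fun x hx => (hd2 x (mem_Ici.mpr hx.1)).hasDerivAt)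
      (hc2.mono (fun x hx => mem_Ici.mpr hx.1))
    rwa [show (-α + 1 : ℝ) = 1 - α by ring] at this
  -- Step A : equality with P on Ioo 0 Y
  have hA : ∀ w ∈ Ioo (0:ℝ) Y, (∫ x in (0:ℝ)..w, F x * (w - x) ^ (-α)) = P w := by
    intro w hw
    rw [hI1F w hw.1, hI1F' w hw.1, ← integral_Ioc_max h2α hw.1.le hw.2.le]
    rw [hP]
    field_simp
    ring
  -- Step B : derivative of KK
  have hcontF'' : ContinuousOn F'' (Ioc 0 Y) := hc2.mono (fun x hx => le_of_lt hx.1)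
  have hker_cont : ∀ (w p : ℝ), 0 < p → Continuous (fun s : ℝ => (max (w - s) 0) ^ p) := by
    intro w p hp
    have hbase : Continuous (fun s : ℝ => max (w - s) 0) :=
      (continuous_const.sub continuous_id).max continuous_const
    exact hbase.rpow_const (fun s => Or.inr hp.le)
  have hmeasK : ∀ w : ℝ, AEStronglyMeasurable (fun s => F'' s * (max (w - s) 0) ^ (2 - α))
      (volume.restrict (Ioc 0 Y)) := fun w =>
    (hcontF''.mul (hker_cont w _ h2α).continuousOn).aestronglyMeasurable measurableSet_Ioc
  have hmeasK' : ∀ w : ℝ, AEStronglyMeasurable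
      (fun s => F'' s * ((2 - α) * (max (w - s) 0) ^ (2 - α - 1)))
      (volume.restrict (Ioc 0 Y)) := fun w =>
    (hcontF''.mul (continuous_const.mul
      (hker_cont w _ (by linarith : (0:ℝ) < 2 - α - 1))).continuousOn).aestronglyMeasurable
      measurableSet_Ioc
  have hμfin : volume (Ioc (0:ℝ) Y) < ⊤ := measure_Ioc_lt_top
  have hKKd : HasDerivAt KK
      ((2 - α) * ∫ s in (0:ℝ)..y, F'' s * (y - s) ^ (1 - α)) y := by
    have key := hasDerivAt_integral_of_dominated_loc_of_deriv_le
      (μ := volume.restrict (Ioc (0:ℝ) Y)) (x₀ := y)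
      (F := fun w s => F'' s * (max (w - s) 0) ^ (2 - α))
      (F' := fun w s => F'' s * ((2 - α) * (max (w - s) 0) ^ (2 - α - 1)))
      (bound := fun _ => M2 * ((2 - α) * Y ^ (2 - α - 1)))
      (s := Metric.ball y (1/2)) (Metric.ball_mem_nhds y (by norm_num))
      (Eventually.of_forall (fun w => hmeasK w))
      ?hint (hmeasK' y) ?hbound ?hbint ?hdiff
    · obtain ⟨-, hder⟩ := key
      have hval : (∫ s in Ioc (0:ℝ) Y, F'' s * ((2 - α) * (max (y - s) 0) ^ (2 - α - 1)))
          = (2 - α) * ∫ s in (0:ℝ)..y, F'' s * (y - s) ^ (1 - α) := by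
        rw [show (2 - α - 1 : ℝ) = 1 - α by ring]
        rw [← integral_Ioc_max (g := F'') h1α hy.le hyY.le, ← MeasureTheory.integral_const_mul]
        apply setIntegral_congr_fun measurableSet_Ioc
        intro s hs
        show F'' s * ((2 - α) * (max (y - s) 0) ^ (1 - α))
          = (2 - α) * (F'' s * (max (y - s) 0) ^ (1 - α))
        ring
      rw [hval] at hder
      exact hder
    case hint =>
      apply Integrable.mono (g := fun _ : ℝ => M2 * Y ^ (2 - α))
        (integrableOn_const hμfin.ne) (hmeasK y)
      rw [ae_restrict_iff' measurableSet_Ioc]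
      filter_upwards with s hs
      have hM2 : 0 ≤ M2 := le_trans (abs_nonneg _) (hb2 0 (mem_Ici.mpr le_rfl))
      have hmx : max (y - s) 0 ≤ Y := max_le (by linarith [hs.1]) hY0.le
      rw [Real.norm_eq_abs, Real.norm_eq_abs, abs_mul,
        abs_of_nonneg (Real.rpow_nonneg (le_max_right _ _) _),
        abs_of_nonneg (by positivity : (0:ℝ) ≤ M2 * Y ^ (2 - α))]
      exact mul_le_mul (hb2 s (mem_Ici.mpr hs.1.le))
        (Real.rpow_le_rpow (le_max_right _ _) hmx h2α.le)
        (Real.rpow_nonneg (le_max_right _ _) _) hM2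
    case hbound =>
      rw [ae_restrict_iff' measurableSet_Ioc]
      filter_upwards with s hs
      intro w hw
      have hM2 : 0 ≤ M2 := le_trans (abs_nonneg _) (hb2 0 (mem_Ici.mpr le_rfl))
      have hwy : |w - y| < 1/2 := by
        have := mem_ball_iff_norm.mp hw; rwa [Real.norm_eq_abs] at this
      have hmx : max (w - s) 0 ≤ Y := by
        apply max_le _ hY0.le
        have := abs_lt.mp hwy
        rw [hYdef]; linarith [hs.1]
      rw [Real.norm_eq_abs, abs_mul, abs_mul,
        abs_of_nonneg (Real.rpow_nonneg (le_max_right _ _) _),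
        abs_of_nonneg h2α.le]
      apply mul_le_mul (hb2 s (mem_Ici.mpr hs.1.le))
        (mul_le_mul_of_nonneg_left
          (Real.rpow_le_rpow (le_max_right _ _) hmx (by linarith)) h2α.le)
        (by positivity) hM2
    case hbint => exact integrableOn_const hμfin.ne
    case hdiff =>
      apply Eventually.of_forall
      intro s w _
      exact (hasDerivAt_max_rpow (by linarith : (1:ℝ) < 2 - α) s w).const_mul (F'' s)
  -- Step C : derivative of P
  have hT1 : HasDerivAt (fun w : ℝ => F 0 * w ^ (1 - α) / (1 - α))
      (F 0 * ((1 - α) * y ^ (1 - α - 1)) / (1 - α)) y :=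
    (((Real.hasDerivAt_rpow_const (p := 1 - α) (Or.inl hy.ne')).const_mul (F 0)).div_const (1 - α))
  have hT2 : HasDerivAt (fun w : ℝ => deriv F 0 * w ^ (2 - α) / ((1 - α) * (2 - α)))
      (deriv F 0 * ((2 - α) * y ^ (2 - α - 1)) / ((1 - α) * (2 - α))) y :=
    (((Real.hasDerivAt_rpow_const (p := 2 - α) (Or.inl hy.ne')).const_mul
      (deriv F 0)).div_const ((1 - α) * (2 - α)))
  have hT3 : HasDerivAt (fun w : ℝ => (1 / ((1 - α) * (2 - α))) * KK w)
      ((1 / ((1 - α) * (2 - α))) * ((2 - α) * ∫ s in (0:ℝ)..y, F'' s * (y - s) ^ (1 - α))) y :=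
    hKKd.const_mul _
  have hPd := (hT1.add hT2).add hT3
  -- Step E : transfer to gp and final value
  have hEq : (fun w => ∫ x in (0:ℝ)..w, F x * (w - x) ^ (-α)) =ᶠ[𝓝 y] P := by
    filter_upwards [Ioo_mem_nhds hy hyY] with w hw using hA w hw
  have hgp := (hPd.congr_of_eventuallyEq hEq)
  have hfinal : F 0 * ((1 - α) * y ^ (1 - α - 1)) / (1 - α)
      + deriv F 0 * ((2 - α) * y ^ (2 - α - 1)) / ((1 - α) * (2 - α))
      + (1 / ((1 - α) * (2 - α))) * ((2 - α) * ∫ s in (0:ℝ)..y, F'' s * (y - s) ^ (1 - α))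
      = F 0 * y ^ (-α) + ∫ x in (0:ℝ)..y, deriv F x * (y - x) ^ (-α) := by
    rw [hI1Fneg y hy, show (1 - α - 1 : ℝ) = -α by ring, show (2 - α - 1 : ℝ) = 1 - α by ring]
    field_simp
    ring
  rwa [hfinal] at hgp

lemma gm_hasDerivAt {F : ℝ → ℝ} {α y M1 MB C1 R1 γ C0 R0 δ : ℝ}
    (hα0 : 0 < α) (hα1 : α < 1) (hy : 0 < y)
    (hd1 : ∀ x ∈ Set.Ici (0:ℝ), DifferentiableAt ℝ F x)
    (hc1 : ContinuousOn (deriv F) (Set.Ici 0))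
    (hM1 : ∀ x ∈ Set.Ici (0:ℝ), |deriv F x| ≤ M1)
    (hMB : ∀ x ∈ Set.Ici (0:ℝ), |F x| ≤ MB)
    (hR1 : 1 ≤ R1) (hdec1 : ∀ x, R1 ≤ x → |deriv F x| ≤ C1 * x ^ γ) (hγ : γ - α < -1)
    (hR0 : 1 ≤ R0) (hdec0 : ∀ x, R0 ≤ x → |F x| ≤ C0 * x ^ δ) (hδ : δ - α < -1) :
    HasDerivAt (fun w => ∫ x in Ioi w, F x * (x - w) ^ (-α))
      (∫ x in Ioi y, deriv F x * (x - y) ^ (-α)) y := by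
  have hFc : ContinuousOn F (Ici 0) := fun x hx => (hd1 x hx).continuousAt.continuousWithinAt
  have hγ0 : γ ≤ 0 := by linarith
  have hC10 : 0 ≤ C1 := by
    have h1 := (abs_nonneg (deriv F R1)).trans (hdec1 R1 le_rfl)
    have h2 : (0:ℝ) < R1 ^ γ := Real.rpow_pos_of_pos (by linarith) γ
    nlinarith
  have hgm_eq : ∀ w : ℝ, (∫ x in Ioi w, F x * (x - w) ^ (-α))
      = ∫ u in Ioi (0:ℝ), F (u + w) * u ^ (-α) := by
    intro w
    have h := shift_integral (fun x => F x * (x - w) ^ (-α)) w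
    simpa using h
  have key := hasDerivAt_integral_of_dominated_loc_of_deriv_le
    (μ := volume.restrict (Ioi (0:ℝ))) (x₀ := y)
    (F := fun w u => F (u + w) * u ^ (-α))
    (F' := fun w u => deriv F (u + w) * u ^ (-α))
    (bound := fun u => if u ≤ R1 then M1 * u ^ (-α) else C1 * u ^ (γ - α))
    (s := Metric.ball y (y/2)) (Metric.ball_mem_nhds y (by positivity))
    ?hmeas ?hint ?hmeas' ?hbound ?hbint ?hdiff
  case hmeas =>
    filter_upwards [Metric.ball_mem_nhds y (by positivity : (0:ℝ) < y/2)] with w hw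
    have hw0 : 0 < w := by
      have := abs_lt.mp (by simpa [Real.norm_eq_abs] using mem_ball_iff_norm.mp hw)
      linarith [this.1]
    apply ContinuousOn.aestronglyMeasurable ?_ measurableSet_Ioi
    intro u hu
    have hu0 : (0:ℝ) < u := hu
    refine ContinuousWithinAt.mul ?_
      ((Real.continuousAt_rpow_const u (-α) (Or.inl hu0.ne')).continuousWithinAt)
    have h1 : HasDerivAt (fun v : ℝ => F (v + w)) (deriv F (u + w) * 1) u :=
      (hd1 (u + w) (by simp only [mem_Ici]; linarith)).hasDerivAt.comp u
        ((hasDerivAt_id u).add_const w)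
    exact h1.continuousAt.continuousWithinAt
  case hint =>
    exact int_shift_kernel hα0 hα1 hy hFc hMB hR0 hdec0 hδ
  case hmeas' =>
    exact (int_shift_kernel hα0 hα1 hy hc1 hM1 hR1 hdec1 hγ).aestronglyMeasurable
  case hbound =>
    rw [ae_restrict_iff' measurableSet_Ioi]
    filter_upwards with u hu
    intro w hw
    have hu0 : (0:ℝ) < u := hu
    have hw0 : 0 < w := by
      have := abs_lt.mp (by simpa [Real.norm_eq_abs] using mem_ball_iff_norm.mp hw)
      linarith [this.1]
    have hk : 0 ≤ u ^ (-α) := Real.rpow_nonneg hu0.le _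
    have hM10 : 0 ≤ M1 := le_trans (abs_nonneg _) (hM1 0 (mem_Ici.mpr le_rfl))
    rw [Real.norm_eq_abs, abs_mul, abs_of_nonneg hk]
    by_cases hcase : u ≤ R1
    · rw [if_pos hcase]
      exact mul_le_mul_of_nonneg_right (hM1 _ (mem_Ici.mpr (by linarith))) hk
    · rw [if_neg hcase]
      have huR : R1 ≤ u := (not_le.mp hcase).le
      have h1 : |deriv F (u + w)| ≤ C1 * (u + w) ^ γ := hdec1 _ (by linarith)
      have h2 : (u + w) ^ γ ≤ u ^ γ := Real.rpow_le_rpow_of_nonpos hu0 (by linarith) hγ0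
      calc |deriv F (u + w)| * u ^ (-α) ≤ C1 * u ^ γ * u ^ (-α) :=
            mul_le_mul_of_nonneg_right
              (h1.trans (mul_le_mul_of_nonneg_left h2 hC10)) hk
        _ = C1 * u ^ (γ - α) := by rw [sub_eq_add_neg, Real.rpow_add hu0]; ring
  case hbint => exact bound_integrable hα0 hα1 (by linarith) hγ
  case hdiff =>
    rw [ae_restrict_iff' measurableSet_Ioi]
    filter_upwards with u hu
    intro w hw
    have hu0 : (0:ℝ) < u := hu
    have hw0 : 0 < w := by
      have := abs_lt.mp (by simpa [Real.norm_eq_abs] using mem_ball_iff_norm.mp hw)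
      linarith [this.1]
    have h1 : HasDerivAt (fun w => F (u + w)) (deriv F (u + w)) w := by
      have := ((hd1 (u + w) (by simp only [mem_Ici]; linarith)).hasDerivAt.comp w
        ((hasDerivAt_id w).const_add u))
      simpa [Function.comp_def] using this
    exact h1.mul_const _
  obtain ⟨-, hder⟩ := key
  have hEq : (fun w => ∫ x in Ioi w, F x * (x - w) ^ (-α))
      =ᶠ[𝓝 y] (fun w => ∫ u in Ioi (0:ℝ), F (u + w) * u ^ (-α)) :=
    Eventually.of_forall hgm_eq
  have hgm := hder.congr_of_eventuallyEq hEq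
  have hval : (∫ u in Ioi (0:ℝ), deriv F (u + y) * u ^ (-α))
      = ∫ x in Ioi y, deriv F x * (x - y) ^ (-α) := by
    rw [shift_integral (fun x => deriv F x * (x - y) ^ (-α)) y]
    simp
  rwa [hval] at hgm

lemma rpow_split {x α : ℝ} (hx : 0 < x) (hα : 0 < α) : x * x ^ (-(1+α)) = x ^ (-α) := by
  nth_rewrite 1 [← Real.rpow_one x]
  rw [← Real.rpow_add hx]
  congr 1
  ring

section ItoSec
variable {F : ℝ → ℝ} {α y M1 MB : ℝ}

lemma itoP_integrable (hα0 : 0 < α) (hα1 : α < 1) (hy : 0 < y)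
    (hd1 : ∀ x ∈ Set.Ici (0:ℝ), DifferentiableAt ℝ F x)
    (hlip : ∀ a ∈ Ici (0:ℝ), ∀ b ∈ Ici (0:ℝ), |F b - F a| ≤ M1 * |b - a|) :
    IntervalIntegrable (fun x => (F (y - x) - F y) * x ^ (-(1+α))) volume 0 y := by
  have hFc : ContinuousOn F (Ici 0) := fun x hx => (hd1 x hx).continuousAt.continuousWithinAt
  have hM10 : 0 ≤ M1 := by
    have := hlip 0 (mem_Ici.mpr le_rfl) 1 (mem_Ici.mpr zero_le_one)
    have h2 := abs_nonneg (F 1 - F 0)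
    simp at this
    linarith
  rw [intervalIntegrable_iff_integrableOn_Ioc_of_le hy.le]
  have hdom : IntegrableOn (fun x : ℝ => M1 * x ^ (-α)) (Ioc 0 y) :=
    (intervalIntegrable_iff_integrableOn_Ioc_of_le hy.le).mp
      ((intervalIntegral.intervalIntegrable_rpow' (by linarith)).const_mul M1)
  apply Integrable.mono hdom
  · apply ContinuousOn.aestronglyMeasurable ?_ measurableSet_Ioc
    apply ContinuousOn.mul
    · apply ContinuousOn.sub ?_ continuousOn_const
      apply hFc.comp ((continuous_const.sub continuous_id).continuousOn)
      intro x hx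
      simp only [mem_Ici, id_eq, Pi.sub_apply]
      linarith [hx.2]
    · intro x hx
      exact (Real.continuousAt_rpow_const x _ (Or.inl (ne_of_gt hx.1))).continuousWithinAt
  · rw [ae_restrict_iff' measurableSet_Ioc]
    filter_upwards with x hx
    have hx0 : (0:ℝ) < x := hx.1
    have hk : 0 ≤ x ^ (-(1+α)) := Real.rpow_nonneg hx0.le _
    have hl : |F (y - x) - F y| ≤ M1 * x := by
      have := hlip y (mem_Ici.mpr hy.le) (y - x) (mem_Ici.mpr (by linarith [hx.2]))
      simpa [abs_of_nonpos, abs_of_nonneg hx0.le] using this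
    rw [Real.norm_eq_abs, Real.norm_eq_abs, abs_mul, abs_of_nonneg hk,
      abs_of_nonneg (by positivity : (0:ℝ) ≤ M1 * x ^ (-α))]
    calc |F (y - x) - F y| * x ^ (-(1+α)) ≤ (M1 * x) * x ^ (-(1+α)) :=
          mul_le_mul_of_nonneg_right hl hk
      _ = M1 * x ^ (-α) := by rw [mul_assoc, rpow_split hx0 hα0]

lemma itoP_identity (hα0 : 0 < α) (hα1 : α < 1) (hy : 0 < y)
    (hd1 : ∀ x ∈ Set.Ici (0:ℝ), DifferentiableAt ℝ F x)
    (hc1 : ContinuousOn (deriv F) (Set.Ici 0))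
    (hlip : ∀ a ∈ Ici (0:ℝ), ∀ b ∈ Ici (0:ℝ), |F b - F a| ≤ M1 * |b - a|) :
    ∫ x in (0:ℝ)..y, (F (y - x) - F y) * x ^ (-(1+α))
      = (F y - F 0) * y ^ (-α) / α
        - (1/α) * ∫ x in (0:ℝ)..y, deriv F x * (y - x) ^ (-α) := by
  have hFc : ContinuousOn F (Ici 0) := fun x hx => (hd1 x hx).continuousAt.continuousWithinAt
  have hM10 : 0 ≤ M1 := by
    have := hlip 0 (mem_Ici.mpr le_rfl) 1 (mem_Ici.mpr zero_le_one)
    have h2 := abs_nonneg (F 1 - F 0)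
    simp at this
    linarith
  set A : ℝ → ℝ := fun x => deriv F (y - x) / α * x ^ (-α) with hA
  set B : ℝ → ℝ := fun x => (F (y - x) - F y) * x ^ (-(1+α)) with hB
  set w : ℝ → ℝ := fun x => (F y - F (y - x)) * (x ^ (-α) / α) with hw
  -- continuity of w on [0, y]
  have hcw : ContinuousOn w (Icc 0 y) := by
    intro x hx
    rcases eq_or_lt_of_le hx.1 with rfl | hx0
    · have hw0 : w 0 = 0 := by simp [hw]
      rw [ContinuousWithinAt, hw0]
      apply squeeze_zero_norm' (a := fun x => M1 / α * x ^ (1 - α))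
      · filter_upwards [self_mem_nhdsWithin] with x hx
        have hx0 : (0:ℝ) ≤ x := hx.1
        rcases eq_or_lt_of_le hx0 with rfl | hx0'
        · simp [hw, Real.zero_rpow (by linarith : (1:ℝ) - α ≠ 0)]
        · have hl : |F y - F (y - x)| ≤ M1 * x := by
            have := hlip (y - x) (mem_Ici.mpr (by linarith [hx.2])) y (mem_Ici.mpr hy.le)
            simpa [abs_of_nonneg hx0'.le] using this
          have hk : 0 ≤ x ^ (-α) := Real.rpow_nonneg hx0 _
          rw [Real.norm_eq_abs, hw, abs_mul, abs_of_nonneg (by positivity : (0:ℝ) ≤ x ^ (-α) / α)]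
          calc |F y - F (y - x)| * (x ^ (-α) / α) ≤ (M1 * x) * (x ^ (-α) / α) := by
                apply mul_le_mul_of_nonneg_right hl (by positivity)
            _ = M1 / α * (x * x ^ (-α)) := by ring
            _ = M1 / α * x ^ (1 - α) := by
                have hsplit : x ^ ((1:ℝ) - α) = x * x ^ (-α) := by
                  rw [show (1:ℝ) - α = 1 + -α by ring, Real.rpow_add hx0', Real.rpow_one]
                rw [hsplit]
      · have hc : ContinuousAt (fun x : ℝ => M1 / α * x ^ (1 - α)) 0 := by
          have h0 : ContinuousAt (fun x : ℝ => x ^ ((1:ℝ) - α)) 0 :=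
            Real.continuousAt_rpow_const 0 (1 - α) (Or.inr (by linarith))
          exact h0.const_mul (M1 / α)
        have h2 : Tendsto (fun x : ℝ => M1 / α * x ^ (1 - α)) (𝓝[Icc 0 y] 0)
            (𝓝 (M1 / α * (0:ℝ) ^ ((1:ℝ) - α))) :=
          hc.tendsto.mono_left nhdsWithin_le_nhds
        simpa [Real.zero_rpow (by linarith : (1:ℝ) - α ≠ 0)] using h2
    · apply ContinuousAt.continuousWithinAt
      apply ContinuousAt.mul
      · apply ContinuousAt.sub continuousAt_const
        have h1 : HasDerivAt (fun v : ℝ => F (y - v)) (deriv F (y - x) * (-1)) x :=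
          (hd1 (y - x) (mem_Ici.mpr (by linarith [hx.2]))).hasDerivAt.comp x
            ((hasDerivAt_id x).const_sub y)
        exact h1.continuousAt
      · exact ((Real.continuousAt_rpow_const x _ (Or.inl hx0.ne')).div_const α)
  -- derivative of w on (0, y)
  have hderiv : ∀ x ∈ Ioo (0:ℝ) y, HasDerivAt w (A x + B x) x := by
    intro x hx
    have hx0 : (0:ℝ) < x := hx.1
    have hu1 : HasDerivAt (fun v : ℝ => F y - F (y - v)) (deriv F (y - x)) x := by
      have h1 : HasDerivAt (fun v : ℝ => F (y - v)) (deriv F (y - x) * (-1)) x :=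
        (hd1 (y - x) (mem_Ici.mpr (by linarith [hx.2]))).hasDerivAt.comp x
          ((hasDerivAt_id x).const_sub y)
      have := h1.const_sub (F y)
      simpa using this
    have hu2 : HasDerivAt (fun x : ℝ => x ^ (-α) / α) (-α * x ^ (-α - 1) / α) x :=
      (Real.hasDerivAt_rpow_const (Or.inl hx0.ne')).div_const α
    have := hu1.mul hu2
    convert this using 1
    any_goals rfl
    rw [hA, hB]
    simp only
    rw [show (-α - 1 : ℝ) = -(1+α) by ring]
    field_simp
    ring
  -- integrability
  have hintA : IntervalIntegrable A volume 0 y := by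
    apply (intervalIntegral.intervalIntegrable_rpow'
      (a := 0) (b := y) (by linarith : (-1:ℝ) < -α)).continuousOn_mul
    rw [uIcc_of_le hy.le]
    apply ContinuousOn.div_const
    apply hc1.comp ((continuous_const.sub continuous_id).continuousOn)
    intro x hx
    simp only [mem_Ici, id_eq, Pi.sub_apply]
    linarith [hx.2]
  have hintB : IntervalIntegrable B volume 0 y :=
    itoP_integrable hα0 hα1 hy hd1 hlip
  -- FTC
  have hFTC := intervalIntegral.integral_eq_sub_of_hasDerivAt_of_le hy.le hcw hderiv
    (hintA.add hintB)
  rw [intervalIntegral.integral_add hintA hintB] at hFTC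
  have hwy : w y = (F y - F 0) * (y ^ (-α) / α) := by simp [hw]
  have hw0 : w 0 = 0 := by simp [hw]
  rw [hwy, hw0, sub_zero] at hFTC
  -- evaluate ∫ A via substitution
  have hAval : (∫ x in (0:ℝ)..y, A x)
      = (1/α) * ∫ x in (0:ℝ)..y, deriv F x * (y - x) ^ (-α) := by
    have h1 : ∀ x : ℝ, A x = (1/α) * ((fun u => deriv F u * (y - u) ^ (-α)) (y - x)) := by
      intro x
      simp only [hA, sub_sub_cancel]
      ring
    rw [show A = fun x => (1/α) * ((fun u => deriv F u * (y - u) ^ (-α)) (y - x)) from funext h1]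
    rw [intervalIntegral.integral_const_mul,
      intervalIntegral.integral_comp_sub_left (fun u => deriv F u * (y - u) ^ (-α)) y]
    rw [sub_self, sub_zero]
  rw [hAval] at hFTC
  linear_combination hFTC



lemma itoM_integrable (hα0 : 0 < α) (hα1 : α < 1) (hy : 0 < y)
    (hd1 : ∀ x ∈ Set.Ici (0:ℝ), DifferentiableAt ℝ F x)
    (hlip : ∀ a ∈ Ici (0:ℝ), ∀ b ∈ Ici (0:ℝ), |F b - F a| ≤ M1 * |b - a|)
    (hMB : ∀ x ∈ Set.Ici (0:ℝ), |F x| ≤ MB) :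
    IntegrableOn (fun x => (F (y + x) - F y) * x ^ (-(1+α))) (Ioi 0) := by
  have hFc : ContinuousOn F (Ici 0) := fun x hx => (hd1 x hx).continuousAt.continuousWithinAt
  have hM10 : 0 ≤ M1 := by
    have := hlip 0 (mem_Ici.mpr le_rfl) 1 (mem_Ici.mpr zero_le_one)
    have h2 := abs_nonneg (F 1 - F 0)
    simp at this
    linarith
  have hMB0 : 0 ≤ MB := le_trans (abs_nonneg _) (hMB 0 (mem_Ici.mpr le_rfl))
  have hdom := bound_integrable (M := M1) (C := 2 * MB) (R := 1) (ρ := -1) hα0 hα1 one_pos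
    (by linarith)
  apply Integrable.mono hdom
  · apply ContinuousOn.aestronglyMeasurable ?_ measurableSet_Ioi
    apply ContinuousOn.mul
    · apply ContinuousOn.sub ?_ continuousOn_const
      apply hFc.comp ((continuous_const.add continuous_id).continuousOn)
      intro x hx
      have : (0:ℝ) < x := hx
      simp only [mem_Ici, id_eq, Pi.add_apply]
      linarith
    · intro x hx
      exact (Real.continuousAt_rpow_const x _
        (Or.inl (ne_of_gt (show (0:ℝ) < x from hx)))).continuousWithinAt
  · rw [ae_restrict_iff' measurableSet_Ioi]
    filter_upwards with x hx
    have hx0 : (0:ℝ) < x := hx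
    have hk : 0 ≤ x ^ (-(1+α)) := Real.rpow_nonneg hx0.le _
    rw [Real.norm_eq_abs, Real.norm_eq_abs, abs_mul, abs_of_nonneg hk]
    by_cases hcase : x ≤ 1
    · rw [if_pos hcase, abs_of_nonneg (by positivity : (0:ℝ) ≤ M1 * x ^ (-α))]
      have hl : |F (y + x) - F y| ≤ M1 * x := by
        have := hlip y (mem_Ici.mpr hy.le) (y + x) (mem_Ici.mpr (by linarith))
        simpa [abs_of_nonneg hx0.le] using this
      calc |F (y + x) - F y| * x ^ (-(1+α)) ≤ (M1 * x) * x ^ (-(1+α)) :=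
            mul_le_mul_of_nonneg_right hl hk
        _ = M1 * x ^ (-α) := by rw [mul_assoc, rpow_split hx0 hα0]
    · rw [if_neg hcase, abs_of_nonneg (by positivity : (0:ℝ) ≤ 2 * MB * x ^ (-1 - α))]
      have hl : |F (y + x) - F y| ≤ 2 * MB := by
        have h1 := hMB (y + x) (mem_Ici.mpr (by linarith))
        have h2 := hMB y (mem_Ici.mpr hy.le)
        calc |F (y + x) - F y| ≤ |F (y + x)| + |F y| := abs_sub _ _
          _ ≤ 2 * MB := by linarith
      have he : x ^ (-(1+α)) = x ^ (-1 - α) := by congr 1; ring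
      rw [he]
      exact mul_le_mul_of_nonneg_right hl (Real.rpow_nonneg hx0.le _)

lemma itoM_identity (hα0 : 0 < α) (hα1 : α < 1) (hy : 0 < y)
    (hd1 : ∀ x ∈ Set.Ici (0:ℝ), DifferentiableAt ℝ F x)
    (hc1 : ContinuousOn (deriv F) (Set.Ici 0))
    (hlip : ∀ a ∈ Ici (0:ℝ), ∀ b ∈ Ici (0:ℝ), |F b - F a| ≤ M1 * |b - a|)
    (hMB : ∀ x ∈ Set.Ici (0:ℝ), |F x| ≤ MB)
    {C1 R1 γ : ℝ} (hR1 : 1 ≤ R1) (hdec1 : ∀ x, R1 ≤ x → |deriv F x| ≤ C1 * x ^ γ)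
    (hγ : γ - α < -1)
    {M1' : ℝ} (hM1 : ∀ x ∈ Set.Ici (0:ℝ), |deriv F x| ≤ M1') :
    ∫ x in Ioi (0:ℝ), (F (y + x) - F y) * x ^ (-(1+α))
      = (1/α) * ∫ x in Ioi (0:ℝ), deriv F (y + x) * x ^ (-α) := by
  have hFc : ContinuousOn F (Ici 0) := fun x hx => (hd1 x hx).continuousAt.continuousWithinAt
  have hM10 : 0 ≤ M1 := by
    have := hlip 0 (mem_Ici.mpr le_rfl) 1 (mem_Ici.mpr zero_le_one)
    have h2 := abs_nonneg (F 1 - F 0)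
    simp at this
    linarith
  have hMB0 : 0 ≤ MB := le_trans (abs_nonneg _) (hMB 0 (mem_Ici.mpr le_rfl))
  set Am : ℝ → ℝ := fun x => -(1/α) * (deriv F (y + x) * x ^ (-α)) with hAm
  set Bm : ℝ → ℝ := fun x => (F (y + x) - F y) * x ^ (-(1+α)) with hBm
  set w : ℝ → ℝ := fun x => (F y - F (y + x)) * (x ^ (-α) / α) with hw
  -- continuity at 0 from the right
  have hcw0 : ContinuousWithinAt w (Ici 0) 0 := by
    have hw0 : w 0 = 0 := by simp [hw]
    rw [ContinuousWithinAt, hw0]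
    apply squeeze_zero_norm' (a := fun x => M1 / α * x ^ (1 - α))
    · filter_upwards [self_mem_nhdsWithin] with x hx
      have hx0 : (0:ℝ) ≤ x := hx
      rcases eq_or_lt_of_le hx0 with rfl | hx0'
      · simp [hw, Real.zero_rpow (by linarith : (1:ℝ) - α ≠ 0)]
      · have hl : |F y - F (y + x)| ≤ M1 * x := by
          have h1 := hlip (y + x) (mem_Ici.mpr (by linarith)) y (mem_Ici.mpr hy.le)
          have h2 : |y - (y + x)| = x := by
            rw [show y - (y + x) = -x by ring, abs_neg, abs_of_nonneg hx0'.le]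
          rwa [h2] at h1
        have hk : 0 ≤ x ^ (-α) := Real.rpow_nonneg hx0 _
        rw [Real.norm_eq_abs, hw]
        simp only
        rw [abs_mul, abs_of_nonneg (by positivity : (0:ℝ) ≤ x ^ (-α) / α)]
        calc |F y - F (y + x)| * (x ^ (-α) / α) ≤ (M1 * x) * (x ^ (-α) / α) :=
              mul_le_mul_of_nonneg_right hl (by positivity)
          _ = M1 / α * (x * x ^ (-α)) := by ring
          _ = M1 / α * x ^ (1 - α) := by
              have hsplit : x ^ ((1:ℝ) - α) = x * x ^ (-α) := by
                rw [show (1:ℝ) - α = 1 + -α by ring, Real.rpow_add hx0', Real.rpow_one]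
              rw [hsplit]
    · have hc : ContinuousAt (fun x : ℝ => M1 / α * x ^ (1 - α)) 0 := by
        have h0 : ContinuousAt (fun x : ℝ => x ^ ((1:ℝ) - α)) 0 :=
          Real.continuousAt_rpow_const 0 (1 - α) (Or.inr (by linarith))
        exact h0.const_mul (M1 / α)
      have h2 : Tendsto (fun x : ℝ => M1 / α * x ^ (1 - α)) (𝓝[Ici 0] 0)
          (𝓝 (M1 / α * (0:ℝ) ^ ((1:ℝ) - α))) :=
        hc.tendsto.mono_left nhdsWithin_le_nhds
      simpa [Real.zero_rpow (by linarith : (1:ℝ) - α ≠ 0)] using h2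
  have hderiv : ∀ x ∈ Ioi (0:ℝ), HasDerivAt w (Am x + Bm x) x := by
    intro x hx
    have hx0 : (0:ℝ) < x := hx
    have hu1 : HasDerivAt (fun v : ℝ => F y - F (y + v)) (-(deriv F (y + x))) x := by
      have h1 : HasDerivAt (fun v : ℝ => F (y + v)) (deriv F (y + x) * 1) x :=
        (hd1 (y + x) (mem_Ici.mpr (by linarith))).hasDerivAt.comp x
          ((hasDerivAt_id x).const_add y)
      have h2 := h1.const_sub (F y)
      simpa using h2
    have hu2 : HasDerivAt (fun x : ℝ => x ^ (-α) / α) (-α * x ^ (-α - 1) / α) x :=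
      (Real.hasDerivAt_rpow_const (Or.inl hx0.ne')).div_const α
    have hmul := hu1.mul hu2
    convert hmul using 1
    any_goals rfl
    rw [hAm, hBm]
    simp only
    rw [show (-α - 1 : ℝ) = -(1+α) by ring]
    field_simp
    ring
  have hintAm : IntegrableOn Am (Ioi 0) := by
    have hker := int_shift_kernel (g := deriv F) hα0 hα1 hy hc1 hM1 hR1 hdec1 hγ
    have h2 : IntegrableOn (fun u => -(1/α) * (deriv F (u + y) * u ^ (-α))) (Ioi 0) :=
      hker.const_mul _
    apply h2.congr_fun ?_ measurableSet_Ioi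
    intro x hx
    simp only [hAm, add_comm x y]
  have hintBm : IntegrableOn Bm (Ioi 0) := itoM_integrable hα0 hα1 hy hd1 hlip hMB
  have htop : Tendsto w atTop (𝓝 0) := by
    apply squeeze_zero_norm' (a := fun x => (2*MB/α) * x ^ (-α))
    · filter_upwards [eventually_ge_atTop (1:ℝ)] with x hx1
      have hx0 : (0:ℝ) < x := by linarith
      have hl : |F y - F (y + x)| ≤ 2 * MB := by
        have h1 := hMB (y + x) (mem_Ici.mpr (by linarith))
        have h2 := hMB y (mem_Ici.mpr hy.le)
        calc |F y - F (y + x)| ≤ |F y| + |F (y + x)| := abs_sub _ _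
          _ ≤ 2 * MB := by linarith
      rw [Real.norm_eq_abs, hw]
      simp only
      rw [abs_mul, abs_of_nonneg (by positivity : (0:ℝ) ≤ x ^ (-α) / α)]
      calc |F y - F (y + x)| * (x ^ (-α) / α) ≤ (2 * MB) * (x ^ (-α) / α) :=
            mul_le_mul_of_nonneg_right hl (by positivity)
        _ = (2*MB/α) * x ^ (-α) := by ring
    · have h3 := (tendsto_rpow_neg_atTop hα0).const_mul (2*MB/α)
      simpa using h3
  have hFTC := integral_Ioi_of_hasDerivAt_of_tendsto hcw0 hderiv (hintAm.add hintBm) htop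
  have hw0 : w 0 = 0 := by simp [hw]
  rw [hw0, sub_zero] at hFTC
  rw [MeasureTheory.integral_add hintAm hintBm] at hFTC
  have hAmval : ∫ x in Ioi (0:ℝ), Am x
      = -(1/α) * ∫ x in Ioi (0:ℝ), deriv F (y + x) * x ^ (-α) := by
    rw [hAm]
    exact MeasureTheory.integral_const_mul _ _
  rw [hAmval] at hFTC
  have hgoal : ∫ x in Ioi (0:ℝ), Bm x
      = (1/α) * ∫ x in Ioi (0:ℝ), deriv F (y + x) * x ^ (-α) := by linarith
  exact hgoal

end ItoSec

end GenThree

open GenThree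

theorem generator_three_forms_general_stable_index_lt_one
    {α cp cm : ℝ} (hα : α ∈ Set.Ioo (0:ℝ) 1) (hcp : 0 ≤ cp) (hcm : 0 ≤ cm) {F : ℝ → ℝ}
    -- `F` is twice continuously differentiable on `[0,∞)`
    (hd1 : ∀ x ∈ Set.Ici (0:ℝ), DifferentiableAt ℝ F x)
    (hc1 : ContinuousOn (deriv F) (Set.Ici 0))
    (hd2 : ∀ x ∈ Set.Ici (0:ℝ), DifferentiableAt ℝ (deriv F) x)
    (hc2 : ContinuousOn (deriv (deriv F)) (Set.Ici 0))
    -- `F'` and `F''` are bounded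
    (hb1 : ∃ M, ∀ x ∈ Set.Ici (0:ℝ), |deriv F x| ≤ M)
    (hb2 : ∃ M, ∀ x ∈ Set.Ici (0:ℝ), |deriv (deriv F) x| ≤ M)
    -- growth conditions at infinity
    (hO1 : ∃ γ < α - 1, (deriv F) =O[atTop] (fun x => x ^ γ))
    (hO0 : ∃ δ < α - 1, F =O[atTop] (fun x => x ^ δ)) :
    ∀ y : ℝ, 0 < y →
      let gp : ℝ → ℝ := fun w => ∫ x in (0:ℝ)..w, F x * (w - x) ^ (-α)
      let gm : ℝ → ℝ := fun w => ∫ x in Set.Ioi w, F x * (x - w) ^ (-α)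
      -- all expressions are well defined
      IntervalIntegrable (fun x => (F (y - x) - F y) * (cp / x ^ (1 + α))) volume 0 y ∧
      IntegrableOn (fun x => (F (y + x) - F y) * (cm / x ^ (1 + α))) (Set.Ioi 0) ∧
      DifferentiableAt ℝ gp y ∧
      DifferentiableAt ℝ gm y ∧
      IntervalIntegrable (fun x => deriv F x * (y - x) ^ (-α)) volume 0 y ∧
      IntegrableOn (fun x => deriv F x * (x - y) ^ (-α)) (Set.Ioi y) ∧
      -- Itô form = Riemann–Liouville form
      ((∫ x in (0:ℝ)..y, (F (y - x) - F y) * (cp / x ^ (1 + α)))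
          + cp * (F 0 - F y) / (α * y ^ α)
          + (∫ x in Set.Ioi (0:ℝ), (F (y + x) - F y) * (cm / x ^ (1 + α)))
        = -(cp / α) * deriv gp y + cp * F 0 / (α * y ^ α) + (cm / α) * deriv gm y) ∧
      -- Riemann–Liouville form = Caputo form
      (-(cp / α) * deriv gp y + cp * F 0 / (α * y ^ α) + (cm / α) * deriv gm y
        = -(cp / α) * (∫ x in (0:ℝ)..y, deriv F x * (y - x) ^ (-α))
          + (cm / α) * ∫ x in Set.Ioi y, deriv F x * (x - y) ^ (-α)) := by
  obtain ⟨hα0, hα1⟩ := hα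
  obtain ⟨M1, hM1⟩ := hb1
  obtain ⟨M2, hM2⟩ := hb2
  -- continuity of F on [0,∞)
  have hFc : ContinuousOn F (Ici 0) := fun x hx => (hd1 x hx).continuousAt.continuousWithinAt
  -- Lipschitz property of F
  have hlip : ∀ a ∈ Ici (0:ℝ), ∀ b ∈ Ici (0:ℝ), |F b - F a| ≤ M1 * |b - a| := by
    intro a ha b hb
    have hder : ∀ x ∈ Ici (0:ℝ), HasDerivWithinAt F (deriv F x) (Ici 0) x :=
      fun x hx => (hd1 x hx).hasDerivAt.hasDerivWithinAt
    have := Convex.norm_image_sub_le_of_norm_hasDerivWithin_le hder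
      (fun x hx => by rw [Real.norm_eq_abs]; exact hM1 x hx) (convex_Ici 0) ha hb
    simpa [Real.norm_eq_abs] using this
  -- decay data for deriv F
  obtain ⟨γ, hγlt, hOγ⟩ := hO1
  rw [Asymptotics.isBigO_iff] at hOγ
  obtain ⟨c1, hc1'⟩ := hOγ
  obtain ⟨r1, hr1⟩ := eventually_atTop.mp hc1'
  set R1 : ℝ := max r1 1 with hR1def
  have hR1 : 1 ≤ R1 := le_max_right _ _
  set C1 : ℝ := max c1 0 with hC1def
  have hdec1 : ∀ x, R1 ≤ x → |deriv F x| ≤ C1 * x ^ γ := by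
    intro x hx
    have hx1 : (1:ℝ) ≤ x := le_trans (le_max_right r1 1) hx
    have h1 := hr1 x (le_trans (le_max_left r1 1) hx)
    rw [Real.norm_eq_abs, Real.norm_eq_abs,
      abs_of_nonneg (Real.rpow_nonneg (by linarith) γ)] at h1
    exact h1.trans (mul_le_mul_of_nonneg_right (le_max_left c1 0)
      (Real.rpow_nonneg (by linarith) γ))
  have hγα : γ - α < -1 := by linarith
  -- decay data for F
  obtain ⟨δ, hδlt, hOδ⟩ := hO0
  rw [Asymptotics.isBigO_iff] at hOδ
  obtain ⟨c0, hc0'⟩ := hOδ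
  obtain ⟨r0, hr0⟩ := eventually_atTop.mp hc0'
  set R0 : ℝ := max r0 1 with hR0def
  have hR0 : 1 ≤ R0 := le_max_right _ _
  set C0 : ℝ := max c0 0 with hC0def
  have hC00 : 0 ≤ C0 := le_max_right _ _
  have hdec0 : ∀ x, R0 ≤ x → |F x| ≤ C0 * x ^ δ := by
    intro x hx
    have hx1 : (1:ℝ) ≤ x := le_trans (le_max_right r0 1) hx
    have h1 := hr0 x (le_trans (le_max_left r0 1) hx)
    rw [Real.norm_eq_abs, Real.norm_eq_abs,
      abs_of_nonneg (Real.rpow_nonneg (by linarith) δ)] at h1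
    exact h1.trans (mul_le_mul_of_nonneg_right (le_max_left c0 0)
      (Real.rpow_nonneg (by linarith) δ))
  have hδα : δ - α < -1 := by linarith
  -- global bound for F
  obtain ⟨B1, hB1⟩ := isCompact_Icc.exists_bound_of_continuousOn
    (hFc.mono (Icc_subset_Ici_self : Icc (0:ℝ) R0 ⊆ Ici 0))
  set MB : ℝ := max B1 C0 with hMBdef
  have hMB : ∀ x ∈ Ici (0:ℝ), |F x| ≤ MB := by
    intro x hx
    have hx0 : (0:ℝ) ≤ x := hx
    by_cases hcase : x ≤ R0
    · have := hB1 x ⟨hx0, hcase⟩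
      rw [Real.norm_eq_abs] at this
      exact this.trans (le_max_left _ _)
    · have h1 := hdec0 x (le_of_not_ge hcase)
      have h2 : x ^ δ ≤ 1 :=
        Real.rpow_le_one_of_one_le_of_nonpos
          (le_trans hR0 (le_of_not_ge hcase)) (by linarith)
      have h3 : C0 * x ^ δ ≤ C0 := by
        calc C0 * x ^ δ ≤ C0 * 1 := mul_le_mul_of_nonneg_left h2 hC00
          _ = C0 := mul_one _
      exact (h1.trans h3).trans (le_max_right _ _)
  -- now fix y
  intro y hy gp gm
  -- canonical objects
  have hgp : HasDerivAt gp
      (F 0 * y ^ (-α) + ∫ x in (0:ℝ)..y, deriv F x * (y - x) ^ (-α)) y :=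
    gp_hasDerivAt hα0 hα1 hy hd1 hc1 hd2 hc2 hM2
  have hgm : HasDerivAt gm (∫ x in Set.Ioi y, deriv F x * (x - y) ^ (-α)) y :=
    gm_hasDerivAt hα0 hα1 hy hd1 hc1 hM1 hMB hR1 hdec1 hγα hR0 hdec0 hδα
  have hdgp : deriv gp y
      = F 0 * y ^ (-α) + ∫ x in (0:ℝ)..y, deriv F x * (y - x) ^ (-α) := hgp.deriv
  have hdgm : deriv gm y = ∫ x in Set.Ioi y, deriv F x * (x - y) ^ (-α) := hgm.deriv
  -- claim 1
  have hrawP : IntervalIntegrable (fun x => (F (y - x) - F y) * x ^ (-(1+α))) volume 0 y :=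
    itoP_integrable hα0 hα1 hy hd1 hlip
  have hclaim1 : IntervalIntegrable (fun x => (F (y - x) - F y) * (cp / x ^ (1 + α)))
      volume 0 y := by
    rw [intervalIntegrable_iff_integrableOn_Ioc_of_le hy.le]
    have h1 : IntegrableOn (fun x => cp * ((F (y - x) - F y) * x ^ (-(1+α)))) (Ioc 0 y) :=
      ((intervalIntegrable_iff_integrableOn_Ioc_of_le hy.le).mp hrawP).const_mul cp
    apply h1.congr_fun ?_ measurableSet_Ioc
    intro x hx
    have hx0 : (0:ℝ) < x := hx.1
    show cp * ((F (y - x) - F y) * x ^ (-(1+α))) = (F (y - x) - F y) * (cp / x ^ (1 + α))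
    rw [Real.rpow_neg hx0.le, div_eq_mul_inv]
    ring
  -- claim 2
  have hrawM : IntegrableOn (fun x => (F (y + x) - F y) * x ^ (-(1+α))) (Ioi 0) :=
    itoM_integrable hα0 hα1 hy hd1 hlip hMB
  have hclaim2 : IntegrableOn (fun x => (F (y + x) - F y) * (cm / x ^ (1 + α))) (Ioi 0) := by
    have h1 : IntegrableOn (fun x => cm * ((F (y + x) - F y) * x ^ (-(1+α)))) (Ioi 0) :=
      hrawM.const_mul cm
    apply h1.congr_fun ?_ measurableSet_Ioi
    intro x hx
    have hx0 : (0:ℝ) < x := hx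
    show cm * ((F (y + x) - F y) * x ^ (-(1+α))) = (F (y + x) - F y) * (cm / x ^ (1 + α))
    rw [Real.rpow_neg hx0.le, div_eq_mul_inv]
    ring
  -- claim 5
  have hclaim5 : IntervalIntegrable (fun x => deriv F x * (y - x) ^ (-α)) volume 0 y := by
    apply (ker_int (y := y) (by linarith : (-1:ℝ) < -α)).continuousOn_mul
    rw [uIcc_of_le hy.le]
    exact hc1.mono (fun x hx => hx.1)
  -- claim 6
  have hclaim6 : IntegrableOn (fun x => deriv F x * (x - y) ^ (-α)) (Ioi y) := by
    have h1 := int_shift_kernel (g := deriv F) (w := y) hα0 hα1 hy hc1 hM1 hR1 hdec1 hγα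
    apply shift_integrableOn.mp
    apply h1.congr_fun ?_ measurableSet_Ioi
    intro u hu
    simp
  -- integral identities
  have hIP : ∫ x in (0:ℝ)..y, (F (y - x) - F y) * (cp / x ^ (1 + α))
      = cp * ∫ x in (0:ℝ)..y, (F (y - x) - F y) * x ^ (-(1+α)) := by
    rw [← intervalIntegral.integral_const_mul]
    apply intervalIntegral.integral_congr
    intro x hx
    rw [uIcc_of_le hy.le] at hx
    show (F (y - x) - F y) * (cp / x ^ (1 + α)) = cp * ((F (y - x) - F y) * x ^ (-(1+α)))
    rcases eq_or_lt_of_le hx.1 with rfl | hx0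
    · simp
    · rw [Real.rpow_neg hx0.le, div_eq_mul_inv]
      ring
  have hIM : ∫ x in Set.Ioi (0:ℝ), (F (y + x) - F y) * (cm / x ^ (1 + α))
      = cm * ∫ x in Set.Ioi (0:ℝ), (F (y + x) - F y) * x ^ (-(1+α)) := by
    rw [← MeasureTheory.integral_const_mul]
    apply setIntegral_congr_fun measurableSet_Ioi
    intro x hx
    have hx0 : (0:ℝ) < x := hx
    show (F (y + x) - F y) * (cm / x ^ (1 + α)) = cm * ((F (y + x) - F y) * x ^ (-(1+α)))
    rw [Real.rpow_neg hx0.le, div_eq_mul_inv]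
    ring
  have hPiden := itoP_identity (M1 := M1) hα0 hα1 hy hd1 hc1 hlip
  have hMiden := itoM_identity (M1 := M1) (MB := MB) hα0 hα1 hy hd1 hc1 hlip hMB
    hR1 hdec1 hγα hM1
  have hshiftM : ∫ x in Set.Ioi (0:ℝ), deriv F (y + x) * x ^ (-α)
      = ∫ x in Set.Ioi y, deriv F x * (x - y) ^ (-α) := by
    rw [shift_integral (fun x => deriv F x * (x - y) ^ (-α)) y]
    apply setIntegral_congr_fun measurableSet_Ioi
    intro u hu
    show deriv F (y + u) * u ^ (-α) = deriv F (u + y) * (u + y - y) ^ (-α)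
    rw [add_sub_cancel_right, add_comm]
  -- abbreviations
  set Cp : ℝ := ∫ x in (0:ℝ)..y, deriv F x * (y - x) ^ (-α) with hCp
  set Cm : ℝ := ∫ x in Set.Ioi y, deriv F x * (x - y) ^ (-α) with hCm
  have hyα : (0:ℝ) < y ^ α := Real.rpow_pos_of_pos hy α
  have hyneg : y ^ (-α) = (y ^ α)⁻¹ := Real.rpow_neg hy.le α
  refine ⟨hclaim1, hclaim2, hgp.differentiableAt, hgm.differentiableAt, hclaim5, hclaim6,
    ?_, ?_⟩
  · -- Itô = RL
    rw [hdgp, hdgm, hIP, hIM, hPiden, hMiden, hshiftM]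
    rw [hyneg]
    field_simp
    ring
  · -- RL = Caputo
    rw [hdgp, hdgm]
    rw [hyneg]
    field_simp
    ring
end
end

section
/- Let α ∈ (1,2), p ∈ (1,α), c > 0 and K ∈ ℝ. Define L(λ) = (K/(c Γ(−α))^{p/α}) · e^{c Γ(−α) λ^α} · λ^{−(1+p)} · Γ(1 + p/α, c Γ(−α) λ^α) for λ > 0. Then L is differentiable on (0,∞), satisfies the linear ordinary differential equation L'(λ) + ((1+p)/λ − (c Γ(2−α)/(α−1)) λ^{α−1}) L(λ) = −K (c Γ(2−α)/(α−1)) λ^{α−2} for all λ > 0, and L(λ) → 0 as λ → ∞. Moreover L is the unique such solution: if M is differentiable on (0,∞), satisfies the same differential equation for all λ > 0, and M(λ) → 0 as λ → ∞, then M = L on (0,∞). -/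
open Set Filter MeasureTheory Topology

noncomputable section

def upperGamma (a x : ℝ) : ℝ := ∫ y in Set.Ioi x, y ^ (a - 1) * Real.exp (-y)

lemma integrableOn_uG {a : ℝ} (ha : 0 < a) {x : ℝ} (hx : 0 ≤ x) :
    IntegrableOn (fun y : ℝ => y ^ (a - 1) * Real.exp (-y)) (Ioi x) := by
  have h := (Real.GammaIntegral_convergent ha).mono_set (Ioi_subset_Ioi hx)
  exact h.congr_fun (fun y _ => mul_comm _ _) measurableSet_Ioi

lemma upperGamma_split {a : ℝ} (ha : 0 < a) {x t : ℝ} (hx : 0 < x) (hxt : x ≤ t) :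
    upperGamma a x = (∫ y in x..t, y ^ (a - 1) * Real.exp (-y)) + upperGamma a t := by
  rw [intervalIntegral.integral_of_le hxt, upperGamma, upperGamma,
    ← setIntegral_union (Ioc_disjoint_Ioi le_rfl) measurableSet_Ioi
      ((integrableOn_uG ha hx.le).mono_set Ioc_subset_Ioi_self)
      ((integrableOn_uG ha hx.le).mono_set (Ioi_subset_Ioi hxt)),
    Ioc_union_Ioi_eq_Ioi hxt]

lemma upperGamma_eq {a : ℝ} (ha : 0 < a) {x t : ℝ} (hx : 0 < x) (ht : 0 < t) :
    upperGamma a t = upperGamma a x - ∫ y in x..t, y ^ (a - 1) * Real.exp (-y) := by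
  rcases le_total x t with h | h
  · rw [upperGamma_split ha hx h]; ring
  · rw [upperGamma_split ha ht h, intervalIntegral.integral_symm]; ring

lemma hasDerivAt_upperGamma {a x : ℝ} (ha : 0 < a) (hx : 0 < x) :
    HasDerivAt (fun t => upperGamma a t) (-(x ^ (a - 1) * Real.exp (-x))) x := by
  have hint : IntervalIntegrable (fun y : ℝ => y ^ (a - 1) * Real.exp (-y)) volume x x :=
    intervalIntegrable_iff.2 ((integrableOn_uG ha hx.le).mono_set (by simp [Set.uIoc]))
  have hcont : ContinuousAt (fun y : ℝ => y ^ (a - 1) * Real.exp (-y)) x :=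
    ((Real.continuousAt_rpow_const _ _ (Or.inl hx.ne')).mul
      (Real.continuous_exp.comp continuous_neg).continuousAt)
  have hmain : HasDerivAt (fun t => upperGamma a x - ∫ y in x..t, y ^ (a - 1) * Real.exp (-y))
      (-(x ^ (a - 1) * Real.exp (-x))) x := by
    have hsm : StronglyMeasurableAtFilter (fun y : ℝ => y ^ (a - 1) * Real.exp (-y)) (𝓝 x) volume := by
      refine ContinuousAt.stronglyMeasurableAtFilter isOpen_Ioi ?_ x hx
      intro y hy
      exact (Real.continuousAt_rpow_const _ _ (Or.inl (ne_of_gt hy))).mul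
        (Real.continuous_exp.comp continuous_neg).continuousAt
    exact ((intervalIntegral.integral_hasDerivAt_right hint hsm hcont).const_sub _)
  refine hmain.congr_of_eventuallyEq ?_
  filter_upwards [eventually_gt_nhds hx] with t ht
  exact upperGamma_eq ha hx ht

lemma upperGamma_nonneg {a x : ℝ} (hx : 0 < x) : 0 ≤ upperGamma a x := by
  refine setIntegral_nonneg measurableSet_Ioi fun y hy => ?_
  exact mul_nonneg (Real.rpow_nonneg (hx.trans hy).le _) (Real.exp_pos _).le

lemma integral_Ioi_mul_exp {u : ℝ} :
    ∫ y in Ioi u, y * Real.exp (-y) = (u + 1) * Real.exp (-u) := by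
  have hderiv : ∀ x ∈ Ici u, HasDerivAt (fun y => -((y + 1) * Real.exp (-y)))
      (x * Real.exp (-x)) x := by
    intro x _
    have h1 : HasDerivAt (fun y : ℝ => (y + 1) * Real.exp (-y))
        (1 * Real.exp (-x) + (x + 1) * (Real.exp (-x) * (-1))) x := by
      exact ((hasDerivAt_id x).add_const 1).mul ((Real.hasDerivAt_exp (-x)).comp x
        ((hasDerivAt_id x).neg))
    convert h1.neg using 1 <;> first | rfl | ring
  have hint : IntegrableOn (fun y : ℝ => y * Real.exp (-y)) (Ioi u) := by
    rcases le_total 0 u with h | h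
    · have := integrableOn_uG (by norm_num : (0:ℝ) < 2) h
      exact this.congr_fun (fun y hy => by
        beta_reduce; rw [show (2:ℝ) - 1 = 1 by norm_num, Real.rpow_one]) measurableSet_Ioi
    · have h1 : IntegrableOn (fun y : ℝ => y * Real.exp (-y)) (Ioi 0) := by
        have := integrableOn_uG (by norm_num : (0:ℝ) < 2) le_rfl
        exact this.congr_fun (fun y hy => by
          beta_reduce; rw [show (2:ℝ) - 1 = 1 by norm_num, Real.rpow_one]) measurableSet_Ioi
      have h2 : IntegrableOn (fun y : ℝ => y * Real.exp (-y)) (Ioc u 0) := by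
        apply (ContinuousOn.integrableOn_compact isCompact_Icc ?_).mono_set Ioc_subset_Icc_self
        exact (continuousOn_id.mul (Real.continuous_exp.comp continuous_neg).continuousOn)
      have := h2.union h1
      rwa [Ioc_union_Ioi_eq_Ioi h] at this
  have htend : Tendsto (fun y : ℝ => -((y + 1) * Real.exp (-y))) atTop (𝓝 0) := by
    rw [show (0:ℝ) = -(0 + 0) by norm_num]
    have h1 : Tendsto (fun y : ℝ => y * Real.exp (-y) + Real.exp (-y)) atTop (𝓝 (0 + 0)) := by
      refine Tendsto.add ?_ Real.tendsto_exp_neg_atTop_nhds_zero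
      have := Real.tendsto_pow_mul_exp_neg_atTop_nhds_zero 1
      simpa using this
    exact Tendsto.neg (h1.congr (fun y => by ring))
  have := integral_Ioi_of_hasDerivAt_of_tendsto'
    (f := fun y => -((y + 1) * Real.exp (-y))) hderiv hint htend
  rw [this]; ring

lemma upperGamma_le {a x : ℝ} (ha0 : 0 < a) (ha : a ≤ 2) (hx : 1 ≤ x) :
    upperGamma a x ≤ (x + 1) * Real.exp (-x) := by
  rw [← integral_Ioi_mul_exp]
  have hx0 : (0:ℝ) < x := lt_of_lt_of_le one_pos hx
  refine setIntegral_mono_on (integrableOn_uG ha0 hx0.le) ?_ measurableSet_Ioi ?_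
  · have := integrableOn_uG (by norm_num : (0:ℝ) < 2) hx0.le
    exact this.congr_fun (fun y hy => by
      beta_reduce; rw [show (2:ℝ) - 1 = 1 by norm_num, Real.rpow_one]) measurableSet_Ioi
  · intro y hy
    have hy1 : 1 ≤ y := hx.trans (le_of_lt hy)
    have : y ^ (a - 1) ≤ y ^ (1:ℝ) :=
      Real.rpow_le_rpow_of_exponent_le hy1 (by linarith)
    rw [Real.rpow_one] at this
    exact mul_le_mul_of_nonneg_right this (Real.exp_pos _).le

/-- explicit derivative of the candidate solution -/
def Lderiv (α p β a C lam : ℝ) : ℝ :=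
  (C * (Real.exp (β * lam ^ α) * (β * (α * lam ^ (α - 1)))) * lam ^ (-(1 + p)) +
      C * Real.exp (β * lam ^ α) * (-(1 + p) * lam ^ (-(1 + p) - 1))) *
    upperGamma a (β * lam ^ α) +
  C * Real.exp (β * lam ^ α) * lam ^ (-(1 + p)) *
    (-((β * lam ^ α) ^ (a - 1) * Real.exp (-(β * lam ^ α))) * (β * (α * lam ^ (α - 1))))

lemma hasDerivAt_Lfun {α p β a lam : ℝ} (C : ℝ) (hβ : 0 < β) (ha : 0 < a) (hlam : 0 < lam) :
    HasDerivAt (fun x : ℝ => C * Real.exp (β * x ^ α) * x ^ (-(1 + p)) * upperGamma a (β * x ^ α))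
      (Lderiv α p β a C lam) lam := by
  have hu : HasDerivAt (fun x : ℝ => β * x ^ α) (β * (α * lam ^ (α - 1))) lam :=
    (Real.hasDerivAt_rpow_const (Or.inl hlam.ne')).const_mul β
  have hu0 : 0 < β * lam ^ α := mul_pos hβ (Real.rpow_pos_of_pos hlam _)
  have hE : HasDerivAt (fun x : ℝ => Real.exp (β * x ^ α))
      (Real.exp (β * lam ^ α) * (β * (α * lam ^ (α - 1)))) lam := hu.exp
  have hP : HasDerivAt (fun x : ℝ => x ^ (-(1 + p))) (-(1 + p) * lam ^ (-(1 + p) - 1)) lam :=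
    Real.hasDerivAt_rpow_const (Or.inl hlam.ne')
  have hG : HasDerivAt (fun x : ℝ => upperGamma a (β * x ^ α))
      (-((β * lam ^ α) ^ (a - 1) * Real.exp (-(β * lam ^ α))) * (β * (α * lam ^ (α - 1)))) lam :=
    by have h := (hasDerivAt_upperGamma ha hu0).comp lam hu; exact h
  exact (((hE.const_mul C).mul hP).mul hG)

lemma ode_algebra {α p β K lam : ℝ} (hα0 : 0 < α) (hβ : 0 < β) (hlam : 0 < lam) :
    Lderiv α p β (1 + p / α) (K / β ^ (p / α)) lam
        + ((1 + p) / lam - α * β * lam ^ (α - 1)) *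
          (K / β ^ (p / α) * Real.exp (β * lam ^ α) * lam ^ (-(1 + p)) *
            upperGamma (1 + p / α) (β * lam ^ α)) =
      -K * (α * β) * lam ^ (α - 2) := by
  have hEne : Real.exp (β * lam ^ α) ≠ 0 := (Real.exp_pos _).ne'
  have hβp : (0:ℝ) < β ^ (p / α) := Real.rpow_pos_of_pos hβ _
  have h1 : lam ^ (-(1 + p) - 1) = lam ^ (-(1 + p)) * lam⁻¹ := by
    rw [Real.rpow_sub hlam, Real.rpow_one, div_eq_mul_inv]
  have h2 : Real.exp (-(β * lam ^ α)) = (Real.exp (β * lam ^ α))⁻¹ := Real.exp_neg _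
  have h3 : (β * lam ^ α) ^ (1 + p / α - 1) = β ^ (p / α) * lam ^ p := by
    rw [show (1 + p / α - 1) = p / α by ring,
      Real.mul_rpow hβ.le (Real.rpow_nonneg hlam.le _), ← Real.rpow_mul hlam.le,
      mul_comm α (p / α), div_mul_cancel₀ p hα0.ne']
  have h4 : lam ^ p * lam ^ (-(1 + p)) * lam ^ (α - 1) = lam ^ (α - 2) := by
    rw [← Real.rpow_add hlam, ← Real.rpow_add hlam]
    congr 1; ring
  rw [Lderiv, h1, h2, h3]
  calc (K / β ^ (p / α) * (Real.exp (β * lam ^ α) * (β * (α * lam ^ (α - 1)))) * lam ^ (-(1 + p)) +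
      K / β ^ (p / α) * Real.exp (β * lam ^ α) * (-(1 + p) * (lam ^ (-(1 + p)) * lam⁻¹))) *
    upperGamma (1 + p / α) (β * lam ^ α) +
  K / β ^ (p / α) * Real.exp (β * lam ^ α) * lam ^ (-(1 + p)) *
    (-(β ^ (p / α) * lam ^ p * (Real.exp (β * lam ^ α))⁻¹) * (β * (α * lam ^ (α - 1))))
        + ((1 + p) / lam - α * β * lam ^ (α - 1)) *
          (K / β ^ (p / α) * Real.exp (β * lam ^ α) * lam ^ (-(1 + p)) *
            upperGamma (1 + p / α) (β * lam ^ α))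
      = -(K / β ^ (p / α) * β ^ (p / α) * (α * β) *
          ((lam ^ p * lam ^ (-(1 + p)) * lam ^ (α - 1)) *
            (Real.exp (β * lam ^ α) * (Real.exp (β * lam ^ α))⁻¹))) := by ring
    _ = -K * (α * β) * lam ^ (α - 2) := by
        rw [div_mul_cancel₀ K hβp.ne', h4, mul_inv_cancel₀ hEne]; ring

lemma phi_tendsto_zero {α p β : ℝ} (hα1 : 1 ≤ α) (hβ : 0 < β) :
    Tendsto (fun lam : ℝ => lam ^ (1 + p) * Real.exp (-(β * lam ^ α))) atTop (𝓝 0) := by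
  refine squeeze_zero_norm' ?_ (tendsto_rpow_mul_exp_neg_mul_atTop_nhds_zero (1 + p) β hβ)
  filter_upwards [eventually_ge_atTop (1:ℝ)] with lam hlam
  have h1 : lam ^ (1:ℝ) ≤ lam ^ α := Real.rpow_le_rpow_of_exponent_le hlam hα1
  rw [Real.rpow_one] at h1
  have h2 : Real.exp (-(β * lam ^ α)) ≤ Real.exp (-β * lam) := by
    apply Real.exp_le_exp.2; nlinarith
  have hlam0 : (0:ℝ) < lam := lt_of_lt_of_le one_pos hlam
  rw [Real.norm_eq_abs, abs_of_nonneg (by positivity)]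
  exact mul_le_mul_of_nonneg_left h2 (Real.rpow_nonneg hlam0.le _)

lemma Lfun_tendsto_zero {α p β a : ℝ} (C : ℝ) (hα0 : 0 < α) (hβ : 0 < β)
    (ha0 : 0 < a) (ha2 : a ≤ 2) (hap : α < 1 + p) (hp0 : 0 < 1 + p) :
    Tendsto (fun lam : ℝ =>
      C * Real.exp (β * lam ^ α) * lam ^ (-(1 + p)) * upperGamma a (β * lam ^ α))
      atTop (𝓝 0) := by
  have hg : Tendsto (fun lam : ℝ => |C| * (β * lam ^ (α - (1 + p)) + lam ^ (-(1 + p))))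
      atTop (𝓝 (|C| * (β * 0 + 0))) := by
    refine Tendsto.const_mul _ (Tendsto.add (Tendsto.const_mul _ ?_) ?_)
    · have := tendsto_rpow_neg_atTop (show (0:ℝ) < (1 + p) - α by linarith)
      refine this.congr fun x => by rw [show -((1 + p) - α) = α - (1 + p) by ring]
    · exact tendsto_rpow_neg_atTop hp0
  rw [show |C| * (β * 0 + 0) = 0 by ring] at hg
  refine squeeze_zero_norm' ?_ hg
  have htop : Tendsto (fun lam : ℝ => β * lam ^ α) atTop atTop :=
    Tendsto.const_mul_atTop hβ (tendsto_rpow_atTop hα0)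
  filter_upwards [eventually_ge_atTop (1:ℝ), htop.eventually_ge_atTop 1] with lam hlam hu1
  have hlam0 : (0:ℝ) < lam := lt_of_lt_of_le one_pos hlam
  have hu0 : 0 < β * lam ^ α := by linarith
  have hG0 : 0 ≤ upperGamma a (β * lam ^ α) := upperGamma_nonneg hu0
  have hGle : upperGamma a (β * lam ^ α) ≤ (β * lam ^ α + 1) * Real.exp (-(β * lam ^ α)) :=
    upperGamma_le ha0 ha2 hu1
  have hEG : Real.exp (β * lam ^ α) * upperGamma a (β * lam ^ α) ≤ β * lam ^ α + 1 := by
    have := mul_le_mul_of_nonneg_left hGle (Real.exp_pos (β * lam ^ α)).le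
    rwa [Real.exp_neg, mul_comm (β * lam ^ α + 1) _, ← mul_assoc,
      mul_inv_cancel₀ (Real.exp_pos _).ne', one_mul] at this
  have hPpos : (0:ℝ) < lam ^ (-(1 + p)) := Real.rpow_pos_of_pos hlam0 _
  rw [Real.norm_eq_abs, abs_mul, abs_mul, abs_mul, abs_of_nonneg (Real.exp_pos _).le,
    abs_of_nonneg hPpos.le, abs_of_nonneg hG0]
  have step : |C| * Real.exp (β * lam ^ α) * lam ^ (-(1 + p)) * upperGamma a (β * lam ^ α)
      ≤ |C| * ((β * lam ^ α + 1) * lam ^ (-(1 + p))) := by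
    have h5 : Real.exp (β * lam ^ α) * upperGamma a (β * lam ^ α) * lam ^ (-(1 + p))
        ≤ (β * lam ^ α + 1) * lam ^ (-(1 + p)) :=
      mul_le_mul_of_nonneg_right hEG hPpos.le
    calc |C| * Real.exp (β * lam ^ α) * lam ^ (-(1 + p)) * upperGamma a (β * lam ^ α)
        = |C| * (Real.exp (β * lam ^ α) * upperGamma a (β * lam ^ α) * lam ^ (-(1 + p))) := by
          ring
      _ ≤ |C| * ((β * lam ^ α + 1) * lam ^ (-(1 + p))) :=
          mul_le_mul_of_nonneg_left h5 (abs_nonneg _)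
  refine step.trans (le_of_eq ?_)
  have h6 : lam ^ (α - (1 + p)) = lam ^ α * lam ^ (-(1 + p)) := by
    rw [show α - (1 + p) = α + -(1 + p) by ring, Real.rpow_add hlam0]
  rw [h6]; ring

theorem laplace_transform_ode_unique_solution
    {α p c K : ℝ} (hα : α ∈ Set.Ioo (1:ℝ) 2) (hp : p ∈ Set.Ioo 1 α) (hc : 0 < c) :
    let L : ℝ → ℝ := fun lam =>
      (K / (c * Real.Gamma (-α)) ^ (p / α)) *
        Real.exp (c * Real.Gamma (-α) * lam ^ α) * lam ^ (-(1 + p)) *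
        upperGamma (1 + p / α) (c * Real.Gamma (-α) * lam ^ α)
    (∀ lam ∈ Set.Ioi (0:ℝ), DifferentiableAt ℝ L lam) ∧
    (∀ lam : ℝ, 0 < lam →
      deriv L lam
          + ((1 + p) / lam - (c * Real.Gamma (2 - α) / (α - 1)) * lam ^ (α - 1)) * L lam
        = -K * (c * Real.Gamma (2 - α) / (α - 1)) * lam ^ (α - 2)) ∧
    Tendsto L atTop (𝓝 0) ∧
    (∀ M : ℝ → ℝ,
      (∀ lam ∈ Set.Ioi (0:ℝ), DifferentiableAt ℝ M lam) →
      (∀ lam : ℝ, 0 < lam →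
        deriv M lam
            + ((1 + p) / lam - (c * Real.Gamma (2 - α) / (α - 1)) * lam ^ (α - 1)) * M lam
          = -K * (c * Real.Gamma (2 - α) / (α - 1)) * lam ^ (α - 2)) →
      Tendsto M atTop (𝓝 0) →
      Set.EqOn M L (Set.Ioi 0)) := by
  obtain ⟨hα1, hα2⟩ := hα
  obtain ⟨hp1, hpα⟩ := hp
  intro L
  have hLdef : L = fun lam =>
      (K / (c * Real.Gamma (-α)) ^ (p / α)) *
        Real.exp (c * Real.Gamma (-α) * lam ^ α) * lam ^ (-(1 + p)) *
        upperGamma (1 + p / α) (c * Real.Gamma (-α) * lam ^ α) := rfl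
  have hα0 : (0:ℝ) < α := by linarith
  have hG2 : Real.Gamma (2 - α) = α * (α - 1) * Real.Gamma (-α) := by
    have h1 : Real.Gamma (1 - α) = -α * Real.Gamma (-α) := by
      have := Real.Gamma_add_one (show -α ≠ 0 by intro h; rw [neg_eq_zero] at h; linarith)
      rw [show -α + 1 = 1 - α by ring] at this
      exact this
    have h2 : Real.Gamma (2 - α) = (1 - α) * Real.Gamma (1 - α) := by
      have := Real.Gamma_add_one (show 1 - α ≠ 0 by intro h; nlinarith)
      rw [show 1 - α + 1 = 2 - α by ring] at this
      exact this
    rw [h2, h1]; ring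
  have hΓpos : 0 < Real.Gamma (-α) := by
    have h2 : 0 < Real.Gamma (2 - α) := Real.Gamma_pos_of_pos (by linarith)
    rw [hG2] at h2
    nlinarith [mul_pos hα0 (show (0:ℝ) < α - 1 by linarith)]
  set β : ℝ := c * Real.Gamma (-α) with hβdef
  have hβ : 0 < β := mul_pos hc hΓpos
  have hcoef : c * Real.Gamma (2 - α) / (α - 1) = α * β := by
    rw [hG2, hβdef, div_eq_iff (show α - 1 ≠ 0 by intro h; nlinarith)]; ring
  have ha0 : (0:ℝ) < 1 + p / α := by positivity
  have ha2 : 1 + p / α ≤ 2 := by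
    have : p / α < 1 := (div_lt_one hα0).2 hpα
    linarith
  have key : ∀ lam : ℝ, 0 < lam →
      HasDerivAt L (Lderiv α p β (1 + p / α) (K / β ^ (p / α)) lam) lam := by
    intro lam hlam
    rw [hLdef]
    exact hasDerivAt_Lfun _ hβ ha0 hlam
  have hode : ∀ lam : ℝ, 0 < lam →
      deriv L lam
          + ((1 + p) / lam - (c * Real.Gamma (2 - α) / (α - 1)) * lam ^ (α - 1)) * L lam
        = -K * (c * Real.Gamma (2 - α) / (α - 1)) * lam ^ (α - 2) := by
    intro lam hlam
    rw [(key lam hlam).deriv, hcoef, hLdef]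
    exact ode_algebra hα0 hβ hlam
  have hLtend : Tendsto L atTop (𝓝 0) := by
    rw [hLdef]
    exact Lfun_tendsto_zero _ hα0 hβ ha0 ha2 (by linarith) (by linarith)
  refine ⟨fun lam hlam => (key lam (mem_Ioi.1 hlam)).differentiableAt, hode, hLtend, ?_⟩
  -- uniqueness
  intro M hMdiff hMode hMtend lam hlam
  rw [mem_Ioi] at hlam
  set φ : ℝ → ℝ := fun x => x ^ (1 + p) * Real.exp (-(β * x ^ α)) with hφdef
  set h : ℝ → ℝ := fun x => (M x - L x) * φ x with hhdef
  have hd0 : ∀ x : ℝ, 0 < x → HasDerivAt h 0 x := by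
    intro x hx
    have hu : HasDerivAt (fun y : ℝ => β * y ^ α) (β * (α * x ^ (α - 1))) x :=
      (Real.hasDerivAt_rpow_const (Or.inl hx.ne')).const_mul β
    have hφd : HasDerivAt φ
        ((1 + p) * x ^ ((1 + p) - 1) * Real.exp (-(β * x ^ α)) +
          x ^ (1 + p) * (Real.exp (-(β * x ^ α)) * -(β * (α * x ^ (α - 1))))) x :=
      (Real.hasDerivAt_rpow_const (Or.inl hx.ne')).mul hu.neg.exp
    have hM : HasDerivAt M (deriv M x) x := (hMdiff x (mem_Ioi.2 hx)).hasDerivAt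
    have hLd : HasDerivAt L (deriv L x) x := (key x hx).differentiableAt.hasDerivAt
    have hbigd : HasDerivAt h
        ((deriv M x - deriv L x) * φ x +
          (M x - L x) * ((1 + p) * x ^ ((1 + p) - 1) * Real.exp (-(β * x ^ α)) +
            x ^ (1 + p) * (Real.exp (-(β * x ^ α)) * -(β * (α * x ^ (α - 1)))))) x :=
      (hM.sub hLd).mul hφd
    have hdiffeq : deriv M x - deriv L x =
        -(((1 + p) / x - (c * Real.Gamma (2 - α) / (α - 1)) * x ^ (α - 1)) * (M x - L x)) := by
      have e1 := hMode x hx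
      have e2 := hode x hx
      nlinarith [e1, e2]
    have hφeq : (1 + p) * x ^ ((1 + p) - 1) * Real.exp (-(β * x ^ α)) +
          x ^ (1 + p) * (Real.exp (-(β * x ^ α)) * -(β * (α * x ^ (α - 1)))) =
        ((1 + p) / x - (c * Real.Gamma (2 - α) / (α - 1)) * x ^ (α - 1)) * φ x := by
      rw [hcoef, hφdef]
      have h6 : x ^ ((1 + p) - 1) = x ^ (1 + p) * x⁻¹ := by
        rw [Real.rpow_sub hx, Real.rpow_one, div_eq_mul_inv]
      rw [h6]
      field_simp
      ring
    have : (deriv M x - deriv L x) * φ x +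
          (M x - L x) * ((1 + p) * x ^ ((1 + p) - 1) * Real.exp (-(β * x ^ α)) +
            x ^ (1 + p) * (Real.exp (-(β * x ^ α)) * -(β * (α * x ^ (α - 1))))) = 0 := by
      rw [hdiffeq, hφeq]; ring
    rwa [this] at hbigd
  have hconst : ∀ x : ℝ, 0 < x → h x = h 1 := by
    intro x hx
    rcases le_total x 1 with hx1 | hx1
    · have h1 := constant_of_has_deriv_right_zero (f := h) (a := x) (b := 1)
        (fun z hz => ((hd0 z (lt_of_lt_of_le hx hz.1)).continuousAt).continuousWithinAt)
        (fun z hz => ((hd0 z (lt_of_lt_of_le hx hz.1)).hasDerivWithinAt))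
      have := h1 1 ⟨hx1, le_refl 1⟩
      linarith
    · have h1 := constant_of_has_deriv_right_zero (f := h) (a := 1) (b := x)
        (fun z hz => ((hd0 z (lt_of_lt_of_le one_pos hz.1)).continuousAt).continuousWithinAt)
        (fun z hz => ((hd0 z (lt_of_lt_of_le one_pos hz.1)).hasDerivWithinAt))
      exact h1 x ⟨hx1, le_refl x⟩
  have hφtend : Tendsto φ atTop (𝓝 0) := phi_tendsto_zero hα1.le hβ
  have hhtend : Tendsto h atTop (𝓝 0) := by
    have := ((hMtend.sub hLtend).mul hφtend)
    simpa using this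
  have hh1 : h 1 = 0 := by
    have h1 : Tendsto h atTop (𝓝 (h 1)) := by
      refine Tendsto.congr' ?_ tendsto_const_nhds
      filter_upwards [eventually_gt_atTop (0:ℝ)] with x hx
      exact (hconst x hx).symm
    exact tendsto_nhds_unique h1 hhtend
  have hzero : h lam = 0 := (hconst lam hlam).trans hh1
  have hφpos : 0 < φ lam := by
    rw [hφdef]
    positivity
  have := mul_eq_zero.1 hzero
  rcases this with h' | h'
  · linarith [sub_eq_zero.1 h']
  · exact absurd h' hφpos.ne'
end
end
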